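/- arXiv:1905.11134 — 3 statements merged into one kernel-verified Lean document; each statement's English description precedes it below -/
import Mathlib

section
/- Characterization Theorem: for any class K of graphs, Mod qId K = D I P^fin_sps K; that is, a graph satisfies all quasi-identities holding in K if and only if it is a directed union of isomorphic copies of finite strong pointed subproducts of members of K. In particular, a class of graphs is a graph quasivariety if and only if it is closed under directed unions of isomorphic copies of finite strong pointed subproducts. -/
open Classical

/-- A graph `(V, E)`: an ambient type `U`, a set `verts ⊆ U` of vertices and an
edge relation `Edge ⊆ verts × verts`. -/
structure GGraph : Type 1 where
  U : Type
  verts : Set U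
  Edge : U → U → Prop
  edge_mem : ∀ a b, Edge a b → a ∈ verts ∧ b ∈ verts

namespace GGraph

/-- The induced subgraph of `G` on a set `S`. -/
def induce (G : GGraph) (S : Set G.U) : GGraph where
  U := G.U
  verts := G.verts ∩ S
  Edge a b := G.Edge a b ∧ a ∈ S ∧ b ∈ S
  edge_mem a b h := ⟨⟨(G.edge_mem a b h.1).1, h.2.1⟩, (G.edge_mem a b h.1).2, h.2.2⟩

/-- The set of vertices reachable from `a` by a directed walk (including `a` itself). -/
def reachSet (G : GGraph) (a : G.U) : Set G.U := {b | Relation.ReflTransGen G.Edge a b}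

/-- The subgraph of `G` induced by the set of vertices reachable from `a`. -/
def reachSub (G : GGraph) (a : G.U) : GGraph := G.induce (G.reachSet a)

/-- A graph is undirected if its edge relation is symmetric. -/
def Undirected (G : GGraph) : Prop := ∀ a b, G.Edge a b → G.Edge b a

end GGraph

/-- A homomorphism of graphs: maps vertices to vertices and edges to edges. -/
def IsHom (G H : GGraph) (f : G.U → H.U) : Prop :=
  (∀ a ∈ G.verts, f a ∈ H.verts) ∧ ∀ a b, G.Edge a b → H.Edge (f a) (f b)

/-- A strong homomorphism: additionally maps non-edges to non-edges. -/
def IsStrongHom (G H : GGraph) (f : G.U → H.U) : Prop :=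
  IsHom G H f ∧ ∀ a ∈ G.verts, ∀ b ∈ G.verts, ¬ G.Edge a b → ¬ H.Edge (f a) (f b)

/-- Isomorphism of graphs. -/
def IsIsomorphic (G H : GGraph) : Prop :=
  ∃ f : G.U → H.U, Set.BijOn f G.verts H.verts ∧
    ∀ a ∈ G.verts, ∀ b ∈ G.verts, (G.Edge a b ↔ H.Edge (f a) (f b))

/-- Terms of type (2,0) over a variable set `X`: variables, the constant `∞`,
and a binary operation (juxtaposition). -/
inductive GTerm (X : Type) : Type
  | var : X → GTerm X
  | inf : GTerm X
  | app : GTerm X → GTerm X → GTerm X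

namespace GTerm

/-- The set of variables occurring in a term. -/
def vars {X : Type} : GTerm X → Set X
  | var x => {x}
  | inf => ∅
  | app t₁ t₂ => t₁.vars ∪ t₂.vars

/-- A term is nontrivial if it contains no occurrence of `∞`. -/
def Nontrivial {X : Type} : GTerm X → Prop
  | var _ => True
  | inf => False
  | app t₁ t₂ => t₁.Nontrivial ∧ t₂.Nontrivial

/-- The leftmost variable of a term (`none` for the bare constant `∞` on the left). -/
def leftVar {X : Type} : GTerm X → Option X
  | var x => some x
  | inf => none
  | app t₁ _ => t₁.leftVar

/-- The edge set of the term graph `G(t)`. -/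
def edges {X : Type} : GTerm X → Set (X × X)
  | var _ => ∅
  | inf => ∅
  | app t₁ t₂ =>
      t₁.edges ∪ t₂.edges ∪
        {p | ∃ x y, t₁.leftVar = some x ∧ t₂.leftVar = some y ∧ p = (x, y)}

theorem vars_finite {X : Type} (t : GTerm X) : t.vars.Finite := by
  induction t with
  | var x => simpa [vars] using Set.finite_singleton x
  | inf => simpa [vars] using Set.finite_empty
  | app t₁ t₂ ih₁ ih₂ => simpa [vars] using ih₁.union ih₂

end GTerm

/-- The term graph `G(t)` of a term `t`: vertices are the variables of `t`. -/
def termGraph {X : Type} (t : GTerm X) : GGraph where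
  U := X
  verts := t.vars
  Edge a b := (a, b) ∈ t.edges ∧ a ∈ t.vars ∧ b ∈ t.vars
  edge_mem a b h := ⟨h.2.1, h.2.2⟩

/-- Evaluation of a term in the graph algebra `A(G)`; `none` plays the role of `∞`:
`x · y = x` if `(x,y)` is an edge, and `∞` otherwise. -/
noncomputable def GGraph.eval (G : GGraph) {X : Type} (h : X → Option G.U) :
    GTerm X → Option G.U
  | .var x => h x
  | .inf => none
  | .app t₁ t₂ =>
      match G.eval h t₁, G.eval h t₂ with
      | some a, some b => if G.Edge a b then some a else none
      | _, _ => none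

/-- Identities: pairs of terms. -/
abbrev GId (X : Type) := GTerm X × GTerm X

/-- An assignment takes values in `V(G) ∪ {∞}`. -/
def GGraph.Assign (G : GGraph) {X : Type} (h : X → Option G.U) : Prop :=
  ∀ x a, h x = some a → a ∈ G.verts

/-- The assignment `h` makes the identity `e` true in `A(G)`. -/
def GGraph.SatIdWith (G : GGraph) {X : Type} (h : X → Option G.U) (e : GId X) : Prop :=
  G.eval h e.1 = G.eval h e.2

/-- `G` satisfies the identity `e`. -/
def GGraph.SatId (G : GGraph) {X : Type} (e : GId X) : Prop :=
  ∀ h : X → Option G.U, G.Assign h → G.SatIdWith h e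

/-- An implication (quasi-identity) over the standard countably infinite
variable set `ℕ`: a finite set of identities (the premise) and an identity
(the consequence). -/
structure Imp : Type where
  prem : Set (GId ℕ)
  concl : GId ℕ
  prem_fin : prem.Finite

/-- `G` satisfies the implication `imp`. -/
def GGraph.SatImp (G : GGraph) (imp : Imp) : Prop :=
  ∀ h : ℕ → Option G.U, G.Assign h →
    (∀ e ∈ imp.prem, G.SatIdWith h e) → G.SatIdWith h imp.concl

/-- The implications satisfied by every member of a class `K` of graphs. -/
def qId (K : Set GGraph) : Set Imp := {imp | ∀ G ∈ K, G.SatImp imp}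

/-- The class of graphs satisfying every implication of `Sg`. -/
def ModI (Sg : Set Imp) : Set GGraph := {G | ∀ imp ∈ Sg, G.SatImp imp}

/-- The finite members of `ModI Sg`. -/
def ModIf (Sg : Set Imp) : Set GGraph := {G | G ∈ ModI Sg ∧ G.verts.Finite}

/-- The pointed graph `G^⊥`: a new vertex `⊥ = none` with edges from `⊥` to all
vertices, including a loop at `⊥`. -/
def GGraph.pointed (G : GGraph) : GGraph where
  U := Option G.U
  verts := insert none (some '' G.verts)
  Edge a b := b ∈ insert none (some '' G.verts) ∧
    (a = none ∨ ∃ u v, a = some u ∧ b = some v ∧ G.Edge u v)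
  edge_mem a b h := by
    refine ⟨?_, h.1⟩
    rcases h.2 with rfl | ⟨u, v, rfl, rfl, huv⟩
    · exact Set.mem_insert _ _
    · exact Set.mem_insert_of_mem _ ⟨u, (G.edge_mem u v huv).1, rfl⟩

/-- Direct product of a family of graphs (componentwise edges). -/
def gProd {I : Type} (G : I → GGraph) : GGraph where
  U := (i : I) → (G i).U
  verts := {a | ∀ i, a i ∈ (G i).verts}
  Edge a b := ∀ i, (G i).Edge (a i) (b i)
  edge_mem a b h :=
    ⟨fun i => ((G i).edge_mem _ _ (h i)).1, fun i => ((G i).edge_mem _ _ (h i)).2⟩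

/-- The pointed product `∏ i, (G i)^⊥` of a family of graphs. -/
def pointedProd {I : Type} (G : I → GGraph) : GGraph := gProd fun i => (G i).pointed

/-- `W` is a strong pointed subproduct of the family `G`:
(1) `W` is an induced subgraph of the pointed product;
(2) every vertex has nonempty support;
(3) for every vertex `a` and every `k` in the support of `a`, the projection `p k`
restricted to `reach_W(a)` is a strong homomorphism into `G k`. -/
def IsSPSofFam {I : Type} (G : I → GGraph) (W : GGraph) : Prop :=
  ∃ S : Set (pointedProd G).U,
    W = (pointedProd G).induce S ∧
    (∀ a ∈ ((pointedProd G).induce S).verts, ∃ i, a i ≠ none) ∧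
    (∀ a ∈ ((pointedProd G).induce S).verts, ∀ k : I, a k ≠ none →
      (∀ b ∈ (((pointedProd G).induce S).reachSub a).verts, b k ≠ none) ∧
      (∀ b ∈ (((pointedProd G).induce S).reachSub a).verts,
        ∀ u, b k = some u → u ∈ (G k).verts) ∧
      (∀ b ∈ (((pointedProd G).induce S).reachSub a).verts,
       ∀ c ∈ (((pointedProd G).induce S).reachSub a).verts,
        ∀ u v, b k = some u → c k = some v →
          ((((pointedProd G).induce S).reachSub a).Edge b c ↔ (G k).Edge u v)))

/-- The class of all strong pointed subproducts of families of members of `K`. -/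
def Psps (K : Set GGraph) : Set GGraph :=
  {W | ∃ (I : Type) (G : I → GGraph), (∀ i, G i ∈ K) ∧ IsSPSofFam G W}

/-- The finite members of `Psps K`. -/
def PspsFin (K : Set GGraph) : Set GGraph := {W | W ∈ Psps K ∧ W.verts.Finite}

/-- Isomorphic copies of members of a class of graphs. -/
def Icl (C : Set GGraph) : Set GGraph := {W | ∃ V ∈ C, IsIsomorphic V W}

/-- `W` is the union of a directed family of members of `C` (the members of the
family are induced subgraphs of a common member, pairwise). -/
def IsDirUnionOf (W : GGraph) (C : Set GGraph) : Prop :=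
  ∃ (ι : Type) (V : ι → Set W.U) (E : ι → W.U → W.U → Prop)
    (hmem : ∀ i, ∀ a b, E i a b → a ∈ V i ∧ b ∈ V i),
    (∀ i, GGraph.mk W.U (V i) (E i) (hmem i) ∈ C) ∧
    (∀ i j, ∃ k,
      (V i ⊆ V k ∧ ∀ a b, E i a b ↔ E k a b ∧ a ∈ V i ∧ b ∈ V i) ∧
      (V j ⊆ V k ∧ ∀ a b, E j a b ↔ E k a b ∧ a ∈ V j ∧ b ∈ V j)) ∧
    W.verts = ⋃ i, V i ∧
    ∀ a b, W.Edge a b ↔ ∃ i, E i a b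

/-- The class of all directed unions of members of `C`. -/
def DCl (C : Set GGraph) : Set GGraph := {W | IsDirUnionOf W C}

/-- Condition (a) of Proposition `IPK-ab`. -/
def CondA (K : Set GGraph) (W : GGraph) : Prop :=
  ∀ a ∈ W.verts, ∃ Ga ∈ K, ∃ φ : W.U → Ga.U, IsStrongHom (W.reachSub a) Ga φ

/-- Condition (b) of Proposition `IPK-ab`. -/
def CondB (K : Set GGraph) (W : GGraph) : Prop :=
  ∀ a ∈ W.verts, ∀ a' ∈ W.verts, a ≠ a' → W.reachSet a = W.reachSet a' →
    ∃ Gp ∈ K, ∃ φ : W.U → Gp.U, IsStrongHom (W.reachSub a) Gp φ ∧ φ a ≠ φ a'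

/-- The identities `x_a x_b ≈ x_a` for edges `(a,b)` of `G` (variables are the
vertices of `G`). -/
def GammaE (G : GGraph) : Set (GId G.U) :=
  {e | ∃ a b, G.Edge a b ∧ e = (GTerm.app (GTerm.var a) (GTerm.var b), GTerm.var a)}

/-- The identities `x_a x_b ≈ ∞` for non-edges `(a,b)` of `G`. -/
def GammaN (G : GGraph) : Set (GId G.U) :=
  {e | ∃ a b, a ∈ G.verts ∧ b ∈ G.verts ∧ ¬ G.Edge a b ∧
    e = (GTerm.app (GTerm.var a) (GTerm.var b), GTerm.inf)}

/-- `Σ(G) = Γ_e(G) ∪ Γ_n(G)`. -/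
def SigmaIds (G : GGraph) : Set (GId G.U) := GammaE G ∪ GammaN G

theorem SigmaIds_finite (G : GGraph) (hfin : G.verts.Finite) : (SigmaIds G).Finite := by
  classical
  have hsub : SigmaIds G ⊆
      (fun p : G.U × G.U =>
        if G.Edge p.1 p.2 then
          (GTerm.app (GTerm.var p.1) (GTerm.var p.2), GTerm.var p.1)
        else (GTerm.app (GTerm.var p.1) (GTerm.var p.2), GTerm.inf)) ''
        (G.verts ×ˢ G.verts) := by
    rintro e (⟨a, b, hab, rfl⟩ | ⟨a, b, ha, hb, hnab, rfl⟩)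
    · exact ⟨(a, b), Set.mk_mem_prod (G.edge_mem a b hab).1 (G.edge_mem a b hab).2,
        by simp [hab]⟩
    · exact ⟨(a, b), Set.mk_mem_prod ha hb, by simp [hnab]⟩
  exact ((hfin.prod hfin).image _).subset hsub

/-! ### Auxiliary lemmas -/

section Helpers

lemma eval_var' (G : GGraph) {X} (h : X → Option G.U) (x : X) : G.eval h (.var x) = h x := rfl
lemma eval_inf' (G : GGraph) {X} (h : X → Option G.U) : G.eval h (.inf) = none := rfl
lemma eval_app' (G : GGraph) {X} (h : X → Option G.U) (t₁ t₂ : GTerm X) :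
    G.eval h (.app t₁ t₂) =
      match G.eval h t₁, G.eval h t₂ with
      | some a, some b => if G.Edge a b then some a else none
      | _, _ => none := rfl

lemma eval_some {G : GGraph} {X} {h : X → Option G.U} {t : GTerm X} {a : G.U}
    (ht : G.eval h t = some a) : ∃ x, h x = some a := by
  induction t with
  | var x => exact ⟨x, ht⟩
  | inf => simp [eval_inf'] at ht
  | app t₁ t₂ ih₁ ih₂ =>
    rw [eval_app'] at ht
    rcases h₁ : G.eval h t₁ with _ | b <;> rw [h₁] at ht
    · simp at ht
    rcases h₂ : G.eval h t₂ with _ | c <;> rw [h₂] at ht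
    · simp at ht
    by_cases he : G.Edge b c
    · simp only [he, if_true, Option.some.injEq] at ht; exact ih₁ (ht ▸ h₁)
    · simp only [he, if_false] at ht; exact absurd ht (by simp)

lemma eval_congr_vars {G : GGraph} {X} {h h' : X → Option G.U} {t : GTerm X}
    (hagree : ∀ x ∈ t.vars, h x = h' x) : G.eval h t = G.eval h' t := by
  induction t with
  | var x => exact hagree x (by simp [GTerm.vars])
  | inf => rfl
  | app t₁ t₂ ih₁ ih₂ =>
    rw [eval_app', eval_app',
      ih₁ fun x hx => hagree x (Or.inl hx), ih₂ fun x hx => hagree x (Or.inr hx)]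

/-- Evaluation only depends on the edge relation between values of the assignment. -/
lemma eval_congr_edge (G : GGraph) {X} (V' : Set G.U) (E' : G.U → G.U → Prop)
    (hmem' : ∀ a b, E' a b → a ∈ V' ∧ b ∈ V') (h : X → Option G.U)
    (hE : ∀ a b, (∃ x, h x = some a) → (∃ y, h y = some b) → (G.Edge a b ↔ E' a b))
    (t : GTerm X) :
    G.eval h t = (GGraph.mk G.U V' E' hmem').eval h t := by
  induction t with
  | var x => rfl
  | inf => rfl
  | app t₁ t₂ ih₁ ih₂ =>
    rw [eval_app', eval_app', ← ih₁, ← ih₂]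
    rcases h₁ : G.eval h t₁ with _ | b
    · rfl
    rcases h₂ : G.eval h t₂ with _ | c
    · rfl
    have hiff := hE b c (eval_some h₁) (eval_some h₂)
    by_cases he : G.Edge b c
    · simp only [if_pos he, if_pos (hiff.1 he)]
    · simp only [if_neg he, if_neg (fun hc => he (hiff.2 hc))]

lemma eval_none_of_verts_empty {G : GGraph} (hGv : G.verts = ∅) {X} {h : X → Option G.U}
    (hassign : G.Assign h) (t : GTerm X) : G.eval h t = none := by
  rcases ht : G.eval h t with _ | a
  · rfl
  · obtain ⟨x, hx⟩ := eval_some ht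
    exact absurd (hassign x a hx) (by rw [hGv]; simp)

lemma satImp_of_verts_empty {G : GGraph} (hGv : G.verts = ∅) (imp : Imp) : G.SatImp imp := by
  intro h hassign _
  unfold GGraph.SatIdWith
  rw [eval_none_of_verts_empty hGv hassign, eval_none_of_verts_empty hGv hassign]

/-- Induced-type subgraphs of models are models. -/
lemma modI_mk_of_modI {Sg : Set Imp} {W : GGraph} (hW : W ∈ ModI Sg) (V' : Set W.U)
    (E' : W.U → W.U → Prop) (hmem' : ∀ a b, E' a b → a ∈ V' ∧ b ∈ V')
    (hsub : V' ⊆ W.verts) (hiff : ∀ a b, a ∈ V' → b ∈ V' → (W.Edge a b ↔ E' a b)) :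
    GGraph.mk W.U V' E' hmem' ∈ ModI Sg := by
  intro imp himp h hassign hprem
  have hval : ∀ a : W.U, (∃ x, h x = some a) → a ∈ V' := fun a ⟨x, hx⟩ => hassign x a hx
  have key : ∀ t : GTerm ℕ, W.eval h t = (GGraph.mk W.U V' E' hmem').eval h t :=
    eval_congr_edge W V' E' hmem' h (fun a b ha hb => hiff a b (hval a ha) (hval b hb))
  have hassignW : W.Assign h := fun x a hx => hsub (hassign x a hx)
  have hc := hW imp himp h hassignW (fun e he => by
    have hp := hprem e he
    unfold GGraph.SatIdWith at hp ⊢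
    rw [key, key]; exact hp)
  unfold GGraph.SatIdWith at hc ⊢
  rw [← key, ← key]; exact hc

/-- Models are preserved by isomorphic copies. -/
lemma modI_isom {Sg : Set Imp} {V W : GGraph} (hV : V ∈ ModI Sg) (hiso : IsIsomorphic V W) :
    W ∈ ModI Sg := by
  obtain ⟨f, hbij, hiff⟩ := hiso
  intro imp himp h hassign hprem
  rcases isEmpty_or_nonempty V.U with hVe | hVne
  · have hWv : W.verts = ∅ := by
      have h1 : V.verts = ∅ := Set.eq_empty_of_isEmpty _
      have h2 := hbij.2.2
      rw [h1] at h2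
      simpa using Set.subset_eq_empty h2 (by simp)
    exact satImp_of_verts_empty hWv imp h hassign hprem
  · have hsurj := hbij.2.2
    have hinj := hbij.2.1
    set g := Function.invFunOn f V.verts with hg
    have hgmem : ∀ b ∈ W.verts, g b ∈ V.verts ∧ f (g b) = b := by
      intro b hb
      obtain ⟨a, ha, hab⟩ := hsurj hb
      exact ⟨Function.invFunOn_mem ⟨a, ha, hab⟩, Function.invFunOn_eq ⟨a, ha, hab⟩⟩
    set h' : ℕ → Option V.U := fun x => (h x).map g with hh'
    have hassign' : V.Assign h' := by
      intro x a hx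
      rcases hxv : h x with _ | b
      · rw [hh'] at hx; simp [hxv] at hx
      · have hb := hassign x b hxv
        have hab : a = g b := by rw [hh'] at hx; simp [hxv] at hx; exact hx.symm
        rw [hab]; exact (hgmem b hb).1
    have hvals' : ∀ (t : GTerm ℕ) (c : V.U), V.eval h' t = some c → c ∈ V.verts :=
      fun t c htc => by obtain ⟨x, hx⟩ := eval_some htc; exact hassign' x c hx
    have key : ∀ t : GTerm ℕ, W.eval h t = (V.eval h' t).map f := by
      intro t
      induction t with
      | var x =>
        rcases hxv : h x with _ | b
        · simp [eval_var', hh', hxv]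
        · have hb := hassign x b hxv
          simp [eval_var', hh', hxv, (hgmem b hb).2]
      | inf => rfl
      | app t₁ t₂ ih₁ ih₂ =>
        rw [eval_app', eval_app']
        rcases h₁ : V.eval h' t₁ with _ | c <;> rw [h₁] at ih₁ <;>
          rcases h₂ : V.eval h' t₂ with _ | d <;> rw [h₂] at ih₂ <;>
          rw [ih₁, ih₂]
        · simp
        · simp
        · simp
        · have hc := hvals' t₁ c h₁
          have hd := hvals' t₂ d h₂
          show (if W.Edge (f c) (f d) then some (f c) else none) =
            Option.map f (if V.Edge c d then some c else none)
          by_cases he : V.Edge c d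
          · rw [if_pos he, if_pos ((hiff c hc d hd).1 he)]; simp
          · rw [if_neg he, if_neg (fun hcon => he ((hiff c hc d hd).2 hcon))]; simp
    have inj_opt : ∀ o₁ o₂ : Option V.U, (∀ c, o₁ = some c → c ∈ V.verts) →
        (∀ c, o₂ = some c → c ∈ V.verts) → o₁.map f = o₂.map f → o₁ = o₂ := by
      intro o₁ o₂ hm₁ hm₂ hmap
      rcases o₁ with _ | c <;> rcases o₂ with _ | d <;> simp at hmap ⊢
      exact hinj (hm₁ c rfl) (hm₂ d rfl) hmap
    have hc := hV imp himp h' hassign' (fun e he => by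
      have hp := hprem e he
      unfold GGraph.SatIdWith at hp ⊢
      rw [key, key] at hp
      exact inj_opt _ _ (hvals' e.1) (hvals' e.2) hp)
    unfold GGraph.SatIdWith at hc ⊢
    rw [key, key, hc]

/-- Models are preserved by directed unions. -/
lemma modI_dirUnion {Sg : Set Imp} {C : Set GGraph} (hC : ∀ G ∈ C, G ∈ ModI Sg) {W : GGraph}
    (hW : IsDirUnionOf W C) : W ∈ ModI Sg := by
  obtain ⟨ι, V, E, hmem, hmemC, hdir, hverts, hedge⟩ := hW
  intro imp himp h hassign hprem
  rcases isEmpty_or_nonempty ι with hι | hι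
  · have hWv : W.verts = ∅ := by rw [hverts]; simp
    exact satImp_of_verts_empty hWv imp h hassign hprem
  · classical
    set X₀ : Set ℕ := (imp.concl.1.vars ∪ imp.concl.2.vars) ∪
      ⋃ e ∈ imp.prem, (e.1.vars ∪ e.2.vars) with hX₀def
    have hX₀ : X₀.Finite :=
      (imp.concl.1.vars_finite.union imp.concl.2.vars_finite).union
        (imp.prem_fin.biUnion fun e _ => e.1.vars_finite.union e.2.vars_finite)
    set F : Set W.U := ⋃ x ∈ X₀, {a | h x = some a} with hFdef
    have hFsub : F ⊆ W.verts := by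
      intro a ha
      obtain ⟨x, -, hx⟩ := Set.mem_iUnion₂.1 ha
      exact hassign x a hx
    have hF : F.Finite := hX₀.biUnion fun x _ =>
      Set.Subsingleton.finite (fun a ha b hb => by
        simp only [Set.mem_setOf_eq] at ha hb
        rw [ha] at hb; exact Option.some.inj hb)
    have hub2 : ∀ i j : ι, ∃ k, V i ⊆ V k ∧ V j ⊆ V k := by
      intro i j
      obtain ⟨k, ⟨hik, _⟩, ⟨hjk, _⟩⟩ := hdir i j
      exact ⟨k, hik, hjk⟩
    have hubF : ∃ k, F ⊆ V k := by
      refine Set.Finite.induction_on_subset (motive := fun s _ => ∃ k, s ⊆ V k) F hF ⟨Classical.arbitrary ι, Set.empty_subset _⟩ ?_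
      rintro a s haF - - ⟨k₀, hk₀⟩
      have haW : a ∈ W.verts := hFsub haF
      rw [hverts] at haW
      obtain ⟨i, hai⟩ := Set.mem_iUnion.1 haW
      obtain ⟨k, hik, hk₀k⟩ := hub2 i k₀
      exact ⟨k, Set.insert_subset (hik hai) (hk₀.trans hk₀k)⟩
    obtain ⟨k, hFk⟩ := hubF
    set h' : ℕ → Option W.U := fun x => if x ∈ X₀ then h x else none with hh'
    have hagree : ∀ t : GTerm ℕ, t.vars ⊆ X₀ → W.eval h t = W.eval h' t :=
      fun t ht => eval_congr_vars (fun x hx => by simp [hh', ht hx])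
    have hvals : ∀ a : W.U, (∃ x, h' x = some a) → a ∈ V k := by
      rintro a ⟨x, hx⟩
      by_cases hxX : x ∈ X₀
      · exact hFk (Set.mem_biUnion hxX (by simpa [hh', hxX] using hx))
      · simp [hh', hxX] at hx
    have hEk : ∀ a b : W.U, a ∈ V k → b ∈ V k → (W.Edge a b ↔ E k a b) := by
      intro a b ha hb
      constructor
      · intro hab
        obtain ⟨i, hi⟩ := (hedge a b).1 hab
        obtain ⟨k', ⟨-, hi'⟩, ⟨-, hk'⟩⟩ := hdir i k
        exact (hk' a b).2 ⟨((hi' a b).1 hi).1, ha, hb⟩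
      · intro hab; exact (hedge a b).2 ⟨k, hab⟩
    have hGk : GGraph.mk W.U (V k) (E k) (hmem k) ∈ ModI Sg := hC _ (hmemC k)
    have key : ∀ t : GTerm ℕ, W.eval h' t = (GGraph.mk W.U (V k) (E k) (hmem k)).eval h' t :=
      eval_congr_edge W (V k) (E k) (hmem k) h'
        (fun a b ha hb => hEk a b (hvals a ha) (hvals b hb))
    have hassign' : (GGraph.mk W.U (V k) (E k) (hmem k)).Assign h' :=
      fun x a hx => hvals a ⟨x, hx⟩
    have hvars1 : ∀ e ∈ imp.prem, (e : GId ℕ).1.vars ⊆ X₀ := fun e he x hx =>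
      Set.mem_union_right _ (Set.mem_biUnion he (Or.inl hx))
    have hvars2 : ∀ e ∈ imp.prem, (e : GId ℕ).2.vars ⊆ X₀ := fun e he x hx =>
      Set.mem_union_right _ (Set.mem_biUnion he (Or.inr hx))
    have hconc := hGk imp himp h' hassign' (fun e he => by
      have hp := hprem e he
      unfold GGraph.SatIdWith at hp ⊢
      rw [← key, ← key, ← hagree e.1 (hvars1 e he), ← hagree e.2 (hvars2 e he)]
      exact hp)
    unfold GGraph.SatIdWith at hconc ⊢
    rw [hagree imp.concl.1 (fun x hx => Set.mem_union_left _ (Or.inl hx)),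
      hagree imp.concl.2 (fun x hx => Set.mem_union_left _ (Or.inr hx)), key, key]
    exact hconc

/-- Strong pointed subproducts of members of `K` satisfy all quasi-identities of `K`. -/
lemma psps_modI {K : Set GGraph} {W : GGraph} (hW : W ∈ Psps K) : W ∈ ModI (qId K) := by
  obtain ⟨I, Gf, hGf, S, rfl, hsupp, hstrong⟩ := hW
  set P := (pointedProd Gf).induce S with hP
  intro imp himp g hg hprem
  have hreach_self : ∀ a : P.U, a ∈ P.reachSet a := fun a => Relation.ReflTransGen.refl
  have hreach_tail : ∀ {a b c : P.U}, b ∈ P.reachSet a → P.Edge b c → c ∈ P.reachSet a :=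
    fun hb he => Relation.ReflTransGen.tail hb he
  have main : ∀ a₀ ∈ P.verts, ∀ k : I, a₀ k ≠ none →
      (P.eval g imp.concl.1).bind (fun c => if c ∈ P.reachSet a₀ then c k else none) =
      (P.eval g imp.concl.2).bind (fun c => if c ∈ P.reachSet a₀ then c k else none) := by
    intro a₀ ha₀ k hk
    obtain ⟨hcl1, hcl2, hcl3⟩ := hstrong a₀ ha₀ k hk
    set f : P.U → Option ((Gf k).U) := fun c => if c ∈ P.reachSet a₀ then c k else none
      with hf
    set g' : ℕ → Option ((Gf k).U) := fun x => (g x).bind f with hg'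
    have hassign' : (Gf k).Assign g' := by
      intro x u hx
      rcases hgx : g x with _ | c
      · rw [hg'] at hx; simp [hgx] at hx
      · have hc : c ∈ P.verts := hg x c hgx
        rw [hg'] at hx
        simp only [hgx, Option.bind_some] at hx
        by_cases hcr : c ∈ P.reachSet a₀
        · have hck : c k = some u := by
            rw [hf] at hx; simp [hcr] at hx; exact hx
          exact hcl2 c ⟨hc, hcr⟩ u hck
        · rw [hf] at hx; simp [hcr] at hx
    have star : ∀ t : GTerm ℕ, (Gf k).eval g' t = (P.eval g t).bind f := by
      intro t
      induction t with
      | var x => rfl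
      | inf => rfl
      | app t₁ t₂ ih₁ ih₂ =>
        rw [eval_app', ih₁, ih₂, eval_app']
        rcases h₁ : P.eval g t₁ with _ | c
        · simp
        rcases h₂ : P.eval g t₂ with _ | b
        · rcases hfc : (some c : Option P.U).bind f with _ | u <;> simp [hfc]
        have hc : c ∈ P.verts := by obtain ⟨x, hx⟩ := eval_some h₁; exact hg x c hx
        have hb : b ∈ P.verts := by obtain ⟨x, hx⟩ := eval_some h₂; exact hg x b hx
        by_cases hcr : c ∈ P.reachSet a₀
        · obtain ⟨u, hu⟩ : ∃ u, c k = some u := by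
            rcases hck : c k with _ | u
            · exact absurd hck (hcl1 c ⟨hc, hcr⟩)
            · exact ⟨u, rfl⟩
          have hfc : (some c : Option P.U).bind f = some u := by simp [hf, hcr, hu]
          by_cases hbr : b ∈ P.reachSet a₀
          · obtain ⟨v, hv⟩ : ∃ v, b k = some v := by
              rcases hbk : b k with _ | v
              · exact absurd hbk (hcl1 b ⟨hb, hbr⟩)
              · exact ⟨v, rfl⟩
            have hfb : (some b : Option P.U).bind f = some v := by simp [hf, hbr, hv]
            rw [hfc, hfb]
            have h3 := hcl3 c ⟨hc, hcr⟩ b ⟨hb, hbr⟩ u v hu hv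
            have hiff : P.Edge c b ↔ (Gf k).Edge u v := by
              constructor
              · intro hE; exact h3.1 ⟨hE, hcr, hbr⟩
              · intro hE; exact (h3.2 hE).1
            show (if (Gf k).Edge u v then some u else none) =
              (if P.Edge c b then some c else none).bind f
            by_cases hE : P.Edge c b
            · rw [if_pos hE, if_pos (hiff.1 hE)]
              simp [hf, hcr, hu]
            · rw [if_neg hE, if_neg (fun hcon => hE (hiff.2 hcon))]
              simp
          · have hfb : (some b : Option P.U).bind f = none := by simp [hf, hbr]
            have hnE : ¬ P.Edge c b := fun hE => hbr (hreach_tail hcr hE)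
            rw [hfc, hfb]
            show (none : Option ((Gf k).U)) =
              (if P.Edge c b then some c else none).bind f
            rw [if_neg hnE]
            simp
        · have hfc : (some c : Option P.U).bind f = none := by simp [hf, hcr]
          rw [hfc]
          rcases hfb : (some b : Option P.U).bind f with _ | v <;>
            by_cases hE : P.Edge c b <;>
            simp [hE, hf, hcr]
    have hsat := himp (Gf k) (hGf k) g' hassign' (fun e he => by
      have hp := hprem e he
      unfold GGraph.SatIdWith at hp ⊢
      rw [star, star, hp])
    unfold GGraph.SatIdWith at hsat
    rw [star, star] at hsat
    exact hsat
  show P.eval g imp.concl.1 = P.eval g imp.concl.2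
  by_contra hne
  rcases es : P.eval g imp.concl.1 with _ | a <;> rcases et : P.eval g imp.concl.2 with _ | b
  · exact hne (es.trans et.symm)
  · have hb : b ∈ P.verts := by obtain ⟨x, hx⟩ := eval_some et; exact hg x b hx
    obtain ⟨k, hk⟩ := hsupp b hb
    have hm := main b hb k hk
    rw [es, et] at hm
    have hm2 : (none : Option ((Gf k).U)) =
        (if b ∈ P.reachSet b then b k else none) := hm
    replace hm2 := hm2.trans (if_pos (hreach_self b))
    exact hk hm2.symm
  · have ha : a ∈ P.verts := by obtain ⟨x, hx⟩ := eval_some es; exact hg x a hx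
    obtain ⟨k, hk⟩ := hsupp a ha
    have hm := main a ha k hk
    rw [es, et] at hm
    have hm2 : (if a ∈ P.reachSet a then a k else none) =
        (none : Option ((Gf k).U)) := hm
    replace hm2 := (if_pos (hreach_self a)).symm.trans hm2
    exact hk hm2
  · have ha : a ∈ P.verts := by obtain ⟨x, hx⟩ := eval_some es; exact hg x a hx
    have hb : b ∈ P.verts := by obtain ⟨x, hx⟩ := eval_some et; exact hg x b hx
    have hne' : a ≠ b := fun hcon => hne (by rw [es, et, hcon])
    obtain ⟨k₀, hk₀⟩ := Function.ne_iff.1 hne'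
    by_cases hbra : b ∈ P.reachSet a
    · by_cases harb : a ∈ P.reachSet b
      · rcases hak : a k₀ with _ | u
        · have hbk : b k₀ ≠ none := fun hcon => hk₀ (hak.trans hcon.symm)
          have hm := main b hb k₀ hbk
          rw [es, et] at hm
          have hm2 : (if a ∈ P.reachSet b then a k₀ else none) =
              (if b ∈ P.reachSet b then b k₀ else none) := hm
          replace hm2 := (if_pos harb).symm.trans (hm2.trans (if_pos (hreach_self b)))
          exact hk₀ hm2
        · have hak' : a k₀ ≠ none := by rw [hak]; exact Option.some_ne_none _
          have hm := main a ha k₀ hak'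
          rw [es, et] at hm
          have hm2 : (if a ∈ P.reachSet a then a k₀ else none) =
              (if b ∈ P.reachSet a then b k₀ else none) := hm
          replace hm2 := (if_pos (hreach_self a)).symm.trans (hm2.trans (if_pos hbra))
          exact hk₀ hm2
      · obtain ⟨k, hk⟩ := hsupp b hb
        have hm := main b hb k hk
        rw [es, et] at hm
        have hm2 : (if a ∈ P.reachSet b then a k else none) =
            (if b ∈ P.reachSet b then b k else none) := hm
        replace hm2 := (if_neg harb).symm.trans (hm2.trans (if_pos (hreach_self b)))
        exact hk hm2.symm
    · obtain ⟨k, hk⟩ := hsupp a ha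
      have hm := main a ha k hk
      rw [es, et] at hm
      have hm2 : (if a ∈ P.reachSet a then a k else none) =
          (if b ∈ P.reachSet a then b k else none) := hm
      replace hm2 := (if_pos (hreach_self a)).symm.trans (hm2.trans (if_neg hbra))
      exact hk hm2

/-- Renaming variables of a term. -/
def trT {α : Type} (g : α → ℕ) : GTerm α → GTerm ℕ
  | .var x => .var (g x)
  | .inf => .inf
  | .app t₁ t₂ => .app (trT g t₁) (trT g t₂)

lemma eval_trT {α : Type} (G : GGraph) (h : ℕ → Option G.U) (g : α → ℕ) (t : GTerm α) :
    G.eval h (trT g t) = G.eval (h ∘ g) t := by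
  induction t with
  | var x => rfl
  | inf => rfl
  | app t₁ t₂ ih₁ ih₂ => rw [trT, eval_app', eval_app', ih₁, ih₂]

/-- Renaming variables of an identity. -/
def trId {α : Type} (g : α → ℕ) (e : GId α) : GId ℕ := (trT g e.1, trT g e.2)

lemma satIdWith_trId {α : Type} {G : GGraph} {h : ℕ → Option G.U} {g : α → ℕ} {e : GId α} :
    G.SatIdWith h (trId g e) ↔ G.SatIdWith (h ∘ g) e := by
  unfold GGraph.SatIdWith trId
  rw [eval_trT, eval_trT]

/-- Semantic content of the identities `Σ(R)`. -/
lemma sigma_spec {R G : GGraph} {h : R.U → Option G.U}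
    (hsat : ∀ e ∈ SigmaIds R, G.SatIdWith h e) :
    (∀ u v, R.Edge u v → ∀ c, h u = some c → ∃ d, h v = some d ∧ G.Edge c d) ∧
    (∀ u v, u ∈ R.verts → v ∈ R.verts → ¬ R.Edge u v →
      ∀ c d, h u = some c → h v = some d → ¬ G.Edge c d) := by
  constructor
  · intro u v huv c hc
    have he := hsat _ (Or.inl ⟨u, v, huv, rfl⟩)
    unfold GGraph.SatIdWith at he
    simp only [eval_app', eval_var'] at he
    rw [hc] at he
    rcases hv : h v with _ | d
    · rw [hv] at he; simp at he
    · rw [hv] at he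
      by_cases hE : G.Edge c d
      · exact ⟨d, rfl, hE⟩
      · have he2 : (if G.Edge c d then some c else (none : Option G.U)) = some c := he
        rw [if_neg hE] at he2; simp at he2
  · intro u v hu hv hnuv c d hc hd hE
    have he := hsat _ (Or.inr ⟨u, v, hu, hv, hnuv, rfl⟩)
    unfold GGraph.SatIdWith at he
    simp only [eval_app', eval_var', eval_inf'] at he
    rw [hc, hd] at he
    have he2 : (if G.Edge c d then some c else (none : Option G.U)) = none := he
    rw [if_pos hE] at he2; simp at he2

/-- Forward closure: along `Σ(reach)`, non-`∞` values propagate along walks. -/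
lemma reach_some {W : GGraph} {a : W.U} {G : GGraph} {h : W.U → Option G.U}
    (hedge : ∀ u v, (W.reachSub a).Edge u v → ∀ c, h u = some c → ∃ d, h v = some d ∧ G.Edge c d)
    (hc : ∃ c, h a = some c) : ∀ u, u ∈ W.reachSet a → ∃ c, h u = some c := by
  intro u hu
  induction hu with
  | refl => exact hc
  | @tail b c hb hbc ih =>
    obtain ⟨cb, hcb⟩ := ih
    obtain ⟨d, hd, -⟩ := hedge b c ⟨hbc, hb, Relation.ReflTransGen.tail hb hbc⟩ cb hcb
    exact ⟨d, hd⟩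

lemma reach_mem_verts {W : GGraph} {a : W.U} (ha : a ∈ W.verts) :
    ∀ u, u ∈ W.reachSet a → u ∈ W.verts := by
  intro u hu
  induction hu with
  | refl => exact ha
  | tail _ hbc _ => exact (W.edge_mem _ _ hbc).2

lemma exists_injOn_nat {α : Type} {s : Set α} (hs : s.Finite) :
    ∃ g : α → ℕ, Set.InjOn g s := by
  haveI := hs.to_subtype
  obtain ⟨f, hf⟩ := Countable.exists_injective_nat s
  refine ⟨fun u => if h : u ∈ s then f ⟨u, h⟩ else 0, ?_⟩
  intro u hu v hv huv
  simp only [] at huv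
  rw [dif_pos hu, dif_pos hv] at huv
  exact Subtype.mk.injEq u hu v hv ▸ congrArg Subtype.val (hf huv)

/-- The canonical assignment making `Σ(reach_W(a))` true in `W`. -/
lemma sigma_h0 {W : GGraph} {a : W.U} {g : W.U → ℕ}
    (hinj : Set.InjOn g W.verts) :
    ∃ h₀ : ℕ → Option W.U, W.Assign h₀ ∧ (∀ u ∈ (W.reachSub a).verts, h₀ (g u) = some u) ∧
      (∀ e ∈ SigmaIds (W.reachSub a), W.SatIdWith (h₀ ∘ g) e) := by
  classical
  set R := W.reachSub a with hR
  have hRsub : R.verts ⊆ W.verts := fun u hu => hu.1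
  refine ⟨fun n => if hn : ∃ u, u ∈ R.verts ∧ g u = n then some hn.choose else none, ?_, ?_, ?_⟩
  · intro x c hx
    simp only [] at hx
    by_cases hn : ∃ u, u ∈ R.verts ∧ g u = x
    · rw [dif_pos hn] at hx
      have := hn.choose_spec.1
      rw [← Option.some.inj hx]
      exact hRsub this
    · rw [dif_neg hn] at hx; simp at hx
  · intro u hu
    have hn : ∃ w, w ∈ R.verts ∧ g w = g u := ⟨u, hu, rfl⟩
    simp only []
    rw [dif_pos hn]
    have hspec := hn.choose_spec
    have : hn.choose = u := hinj (hRsub hspec.1) (hRsub hu) hspec.2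
    rw [this]; rfl
  · intro e he
    set h₀ : ℕ → Option W.U :=
      fun n => if hn : ∃ u, u ∈ R.verts ∧ g u = n then some hn.choose else none with hh₀
    have hval : ∀ u ∈ R.verts, h₀ (g u) = some u := by
      intro u hu
      have hn : ∃ w, w ∈ R.verts ∧ g w = g u := ⟨u, hu, rfl⟩
      rw [hh₀]
      simp only []
      rw [dif_pos hn]
      have hspec := hn.choose_spec
      have : hn.choose = u := hinj (hRsub hspec.1) (hRsub hu) hspec.2
      rw [this]; rfl
    have key : ∀ x y : W.U, h₀ (g x) = some x → h₀ (g y) = some y →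
        W.eval (h₀ ∘ g) (GTerm.app (GTerm.var x) (GTerm.var y)) =
          if W.Edge x y then some x else none := by
      intro x y hx hy
      simp only [eval_app', eval_var', Function.comp, hx, hy]
    rcases he with ⟨u, v, huv, rfl⟩ | ⟨u, v, hu, hv, hnuv, rfl⟩
    · have hu : u ∈ R.verts := (R.edge_mem u v huv).1
      have hv : v ∈ R.verts := (R.edge_mem u v huv).2
      have hWuv : W.Edge u v := huv.1
      unfold GGraph.SatIdWith
      exact (key u v (hval u hu) (hval v hv)).trans ((if_pos hWuv).trans (hval u hu).symm)
    · have hnWuv : ¬ W.Edge u v := fun hcon => hnuv ⟨hcon, hu.2, hv.2⟩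
      unfold GGraph.SatIdWith
      exact (key u v (hval u hu) (hval v hv)).trans (if_neg hnWuv)

/-- Building a strong homomorphism from a `Σ`-satisfying assignment. -/
lemma strong_of_sigma {W G : GGraph} {a : W.U} {h' : W.U → Option G.U}
    (hassign : ∀ u c, h' u = some c → c ∈ G.verts)
    (hedge : ∀ u v, (W.reachSub a).Edge u v → ∀ c, h' u = some c →
      ∃ d, h' v = some d ∧ G.Edge c d)
    (hnon : ∀ u v, u ∈ (W.reachSub a).verts → v ∈ (W.reachSub a).verts →
      ¬ (W.reachSub a).Edge u v → ∀ c d, h' u = some c → h' v = some d → ¬ G.Edge c d)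
    (hall : ∀ u, u ∈ W.reachSet a → ∃ c, h' u = some c) (w₀ : G.U) :
    IsStrongHom (W.reachSub a) G (fun u => (h' u).getD w₀) := by
  refine ⟨⟨?_, ?_⟩, ?_⟩
  · intro u hu
    obtain ⟨c, hc⟩ := hall u hu.2
    simp only [hc, Option.getD_some]
    exact hassign u c hc
  · intro u v huv
    obtain ⟨c, hc⟩ := hall u huv.2.1
    obtain ⟨d, hd, hE⟩ := hedge u v huv c hc
    simp only [hc, hd, Option.getD_some]
    exact hE
  · intro u hu v hv hnuv
    obtain ⟨c, hc⟩ := hall u hu.2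
    obtain ⟨d, hd⟩ := hall v hv.2
    simp only [hc, hd, Option.getD_some]
    exact hnon u v hu hv hnuv c d hc hd

lemma condA_of_modI {K : Set GGraph} {W : GGraph} (hfin : W.verts.Finite)
    (hW : W ∈ ModI (qId K)) : CondA K W := by
  intro a ha
  by_contra hno
  push_neg at hno
  obtain ⟨g, hinj⟩ := exists_injOn_nat hfin
  have hRfin : (W.reachSub a).verts.Finite := hfin.inter_of_left _
  have hprem_fin : (trId g '' SigmaIds (W.reachSub a)).Finite :=
    (SigmaIds_finite _ hRfin).image _
  set imp : Imp := ⟨trId g '' SigmaIds (W.reachSub a),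
    (GTerm.var (g a), GTerm.inf), hprem_fin⟩ with himpdef
  have himp : imp ∈ qId K := by
    intro G hG h hassign hpremτ
    have hprem : ∀ e ∈ SigmaIds (W.reachSub a), G.SatIdWith (h ∘ g) e := fun e he =>
      satIdWith_trId.1 (hpremτ _ ⟨e, he, rfl⟩)
    obtain ⟨hedge, hnon⟩ := sigma_spec hprem
    show G.eval h (GTerm.var (g a)) = G.eval h GTerm.inf
    rw [eval_var', eval_inf']
    by_contra hne
    obtain ⟨w₀, hw₀⟩ : ∃ w₀, (h ∘ g) a = some w₀ := by
      rcases hh : h (g a) with _ | w₀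
      · exact absurd hh hne
      · exact ⟨w₀, hh⟩
    have hall := reach_some hedge ⟨w₀, hw₀⟩
    exact hno G hG _ (strong_of_sigma (fun u c hc => hassign (g u) c hc)
      hedge hnon hall w₀)
  obtain ⟨h₀, hassign₀, hval₀, hsat₀⟩ := sigma_h0 (a := a) hinj
  have hc := hW imp himp h₀ hassign₀ (fun e he => by
    obtain ⟨e₀, he₀, rfl⟩ := he
    exact satIdWith_trId.2 (hsat₀ e₀ he₀))
  have hga : h₀ (g a) = some a := hval₀ a ⟨ha, Relation.ReflTransGen.refl⟩
  unfold GGraph.SatIdWith at hc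
  rw [eval_var', eval_inf', hga] at hc
  simp at hc

lemma condB_of_modI {K : Set GGraph} {W : GGraph} (hfin : W.verts.Finite)
    (hW : W ∈ ModI (qId K)) : CondB K W := by
  intro a ha a' ha' hnea hreach
  by_contra hno
  push_neg at hno
  obtain ⟨g, hinj⟩ := exists_injOn_nat hfin
  have hRfin : (W.reachSub a).verts.Finite := hfin.inter_of_left _
  have hprem_fin : (trId g '' SigmaIds (W.reachSub a)).Finite :=
    (SigmaIds_finite _ hRfin).image _
  set imp : Imp := ⟨trId g '' SigmaIds (W.reachSub a),
    (GTerm.var (g a), GTerm.var (g a')), hprem_fin⟩ with himpdef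
  have hsub' : W.reachSub a' = W.reachSub a := by
    unfold GGraph.reachSub
    rw [hreach]
  have haa' : a' ∈ W.reachSet a := hreach ▸ Relation.ReflTransGen.refl
  have ha'a : a ∈ W.reachSet a' := hreach.symm ▸ Relation.ReflTransGen.refl
  have himp : imp ∈ qId K := by
    intro G hG h hassign hpremτ
    have hprem : ∀ e ∈ SigmaIds (W.reachSub a), G.SatIdWith (h ∘ g) e := fun e he =>
      satIdWith_trId.1 (hpremτ _ ⟨e, he, rfl⟩)
    obtain ⟨hedge, hnon⟩ := sigma_spec hprem
    show G.eval h (GTerm.var (g a)) = G.eval h (GTerm.var (g a'))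
    rw [eval_var', eval_var']
    have hedge' : ∀ u v, (W.reachSub a').Edge u v → ∀ c, (h ∘ g) u = some c →
        ∃ d, (h ∘ g) v = some d ∧ G.Edge c d := by
      intro u v huv
      exact hedge u v ⟨huv.1, by rw [hreach]; exact huv.2.1, by rw [hreach]; exact huv.2.2⟩
    rcases hha : h (g a) with _ | c
    · rcases hha' : h (g a') with _ | c'
      · rfl
      · obtain ⟨c, hc⟩ := reach_some hedge' ⟨c', hha'⟩ a ha'a
        rw [show (h ∘ g) a = h (g a) from rfl, hha] at hc
        simp at hc
    · have hall := reach_some hedge ⟨c, hha⟩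
      obtain ⟨c', hc'⟩ := hall a' haa'
      have hstrong := strong_of_sigma (fun u d hd => hassign (g u) d hd)
        hedge hnon hall c
      have heq := hno G hG _ hstrong
      have hc'' : h (g a') = some c' := hc'
      have h1 : (h (g a)).getD c = c := by rw [hha]; rfl
      have h2 : (h (g a')).getD c = c' := by rw [hc'']; rfl
      have hcc : c = c' := by
        rw [← h1, ← h2]
        exact heq
      rw [hc'', hcc]
  obtain ⟨h₀, hassign₀, hval₀, hsat₀⟩ := sigma_h0 (a := a) hinj
  have hc := hW imp himp h₀ hassign₀ (fun e he => by
    obtain ⟨e₀, he₀, rfl⟩ := he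
    exact satIdWith_trId.2 (hsat₀ e₀ he₀))
  have hga : h₀ (g a) = some a := hval₀ a ⟨ha, Relation.ReflTransGen.refl⟩
  have hga' : h₀ (g a') = some a' := hval₀ a' ⟨ha', haa'⟩
  unfold GGraph.SatIdWith at hc
  rw [eval_var', eval_var', hga, hga'] at hc
  exact hnea (Option.some.inj hc)

/-- The main embedding: a finite graph (on a nonempty ambient type) satisfying
conditions (a) and (b) is an isomorphic copy of a finite strong pointed subproduct. -/
lemma mem_Icl_PspsFin {K : Set GGraph} {W : GGraph} (hne : Nonempty W.U)
    (hfin : W.verts.Finite) (hA : CondA K W) (hB : CondB K W) : W ∈ Icl (PspsFin K) := by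
  classical
  have hre_self : ∀ w : W.U, w ∈ W.reachSet w := fun _ => Relation.ReflTransGen.refl
  have hre_tail : ∀ {x y z : W.U}, y ∈ W.reachSet x → W.Edge y z → z ∈ W.reachSet x :=
    fun hy hyz => Relation.ReflTransGen.tail hy hyz
  have hre_trans : ∀ {x y : W.U}, y ∈ W.reachSet x → W.reachSet y ⊆ W.reachSet x :=
    fun hy z hz => Relation.ReflTransGen.trans hy hz
  let I : Type := {a : W.U // a ∈ W.verts} ⊕
    {p : W.U × W.U // p.1 ∈ W.verts ∧ p.2 ∈ W.verts ∧ p.1 ≠ p.2 ∧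
      W.reachSet p.1 = W.reachSet p.2}
  let base : I → W.U := Sum.elim (fun a => a.1) (fun p => p.1.1)
  have hbase : ∀ i, base i ∈ W.verts := by
    rintro (a | p)
    · exact a.2
    · exact p.2.1
  have H : ∀ i : I, ∃ GG : GGraph, GG ∈ K ∧ ∃ φ : W.U → GG.U,
      IsStrongHom (W.reachSub (base i)) GG φ ∧
      ∀ (p : W.U × W.U) (hp : p.1 ∈ W.verts ∧ p.2 ∈ W.verts ∧ p.1 ≠ p.2 ∧
        W.reachSet p.1 = W.reachSet p.2), i = Sum.inr ⟨p, hp⟩ → φ p.1 ≠ φ p.2 := by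
    rintro (a | p)
    · obtain ⟨GG, hGG, φ, hφ⟩ := hA a.1 a.2
      exact ⟨GG, hGG, φ, hφ, by rintro p hp h; exact absurd h (by simp)⟩
    · obtain ⟨GG, hGG, φ, hφ, hsep⟩ :=
        hB p.1.1 p.2.1 p.1.2 p.2.2.1 p.2.2.2.1 p.2.2.2.2
      refine ⟨GG, hGG, φ, hφ, ?_⟩
      rintro q hq h
      have hpq : p = ⟨q, hq⟩ := Sum.inr.inj h
      have hpq1 : p.1 = q := congrArg Subtype.val hpq
      rw [← hpq1]
      exact hsep
  choose Gfam hKf φf hhom hsep using H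
  let e : W.U → (pointedProd Gfam).U :=
    fun w i => if w ∈ W.reachSet (base i) then some (φf i w) else none
  let S : Set (pointedProd Gfam).U := e '' W.verts
  have he_some : ∀ (i : I) (w : W.U), w ∈ W.reachSet (base i) → e w i = some (φf i w) :=
    fun i w hr => if_pos hr
  have he_none : ∀ (i : I) (w : W.U), w ∉ W.reachSet (base i) → e w i = none :=
    fun i w hr => if_neg hr
  have hφmem : ∀ (i : I) (w : W.U), w ∈ W.verts → w ∈ W.reachSet (base i) →
      φf i w ∈ (Gfam i).verts := fun i w hw hr => (hhom i).1.1 w ⟨hw, hr⟩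
  have hPmem : ∀ w ∈ W.verts, e w ∈ (pointedProd Gfam).verts := by
    intro w hw i
    by_cases hr : w ∈ W.reachSet (base i)
    · rw [he_some i w hr]; exact Set.mem_insert_of_mem _ ⟨_, hφmem i w hw hr, rfl⟩
    · rw [he_none i w hr]; exact Set.mem_insert _ _
  set P := (pointedProd Gfam).induce S with hPdef
  have hPverts : P.verts = S := Set.inter_eq_right.mpr
    (by rintro x ⟨w, hw, rfl⟩; exact hPmem w hw)
  have hEdge : ∀ u ∈ W.verts, ∀ v ∈ W.verts, (W.Edge u v ↔ P.Edge (e u) (e v)) := by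
    intro u hu v hv
    constructor
    · intro huv
      refine ⟨fun i => ⟨hPmem v hv i, ?_⟩, ⟨u, hu, rfl⟩, ⟨v, hv, rfl⟩⟩
      by_cases hr : u ∈ W.reachSet (base i)
      · have hrv : v ∈ W.reachSet (base i) := hre_tail hr huv
        right
        exact ⟨φf i u, φf i v, he_some i u hr, he_some i v hrv,
          (hhom i).1.2 u v ⟨huv, hr, hrv⟩⟩
      · left; exact he_none i u hr
    · rintro ⟨hpe, -, -⟩
      have hi := hpe (Sum.inl ⟨u, hu⟩)
      have hru : u ∈ W.reachSet (base (Sum.inl ⟨u, hu⟩)) := hre_self u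
      rcases hi.2 with h0 | ⟨x, y, hx, hy, hxy⟩
      · rw [he_some _ u hru] at h0; simp at h0
      · rw [he_some _ u hru] at hx
        have hxφ : x = φf _ u := (Option.some.inj hx).symm
        by_cases hrv : v ∈ W.reachSet u
        · have hrv' : v ∈ W.reachSet (base (Sum.inl ⟨u, hu⟩)) := hrv
          rw [he_some _ v hrv'] at hy
          have hyφ : y = φf _ v := (Option.some.inj hy).symm
          by_contra hnuv
          have hnR : ¬ (W.reachSub (base (Sum.inl ⟨u, hu⟩))).Edge u v := fun hc => hnuv hc.1
          exact (hhom _).2 u ⟨hu, hru⟩ v ⟨hv, hrv'⟩ hnR (hxφ ▸ hyφ ▸ hxy)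
        · have hrv' : v ∉ W.reachSet (base (Sum.inl ⟨u, hu⟩)) := hrv
          rw [he_none _ v hrv'] at hy
          simp at hy
  have hinj : Set.InjOn e W.verts := by
    intro u hu v hv huv
    by_contra hneq
    by_cases hr : W.reachSet u = W.reachSet v
    · set i : I := Sum.inr ⟨(u, v), hu, hv, hneq, hr⟩ with hidef
      have h1 : e u i = some (φf i u) := he_some i u (hre_self u)
      have h2 : e v i = some (φf i v) := he_some i v (by
        show v ∈ W.reachSet u
        rw [hr]
        exact hre_self v)
      have hcong := congrFun huv i
      rw [h1, h2] at hcong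
      exact hsep i (u, v) ⟨hu, hv, hneq, hr⟩ hidef (Option.some.inj hcong)
    · have hcase : u ∉ W.reachSet v ∨ v ∉ W.reachSet u := by
        by_contra hq
        push_neg at hq
        exact hr (Set.Subset.antisymm (hre_trans hq.1) (hre_trans hq.2))
      rcases hcase with hcu | hcv
      · have h1 : e v (Sum.inl ⟨v, hv⟩) = some (φf _ v) := he_some _ v (hre_self v)
        have h2 : e u (Sum.inl ⟨v, hv⟩) = none := he_none _ u hcu
        have hcong := congrFun huv (Sum.inl ⟨v, hv⟩)
        rw [h1, h2] at hcong
        simp at hcong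
      · have h1 : e u (Sum.inl ⟨u, hu⟩) = some (φf _ u) := he_some _ u (hre_self u)
        have h2 : e v (Sum.inl ⟨u, hu⟩) = none := he_none _ v hcv
        have hcong := congrFun huv (Sum.inl ⟨u, hu⟩)
        rw [h1, h2] at hcong
        simp at hcong
  have hreachP : ∀ w ∈ W.verts, ∀ b, b ∈ P.reachSet (e w) →
      ∃ y, y ∈ W.verts ∧ y ∈ W.reachSet w ∧ b = e y := by
    intro w hw b hb
    induction hb with
    | refl => exact ⟨w, hw, hre_self w, rfl⟩
    | @tail m c hm hmc ih =>
      obtain ⟨y, hy, hyr, rfl⟩ := ih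
      have hcS : c ∈ S := ((P.edge_mem _ _ hmc).2).2
      obtain ⟨z, hz, rfl⟩ := hcS
      exact ⟨z, hz, hre_tail hyr ((hEdge y hy z hz).2 hmc), rfl⟩
  have hreachP' : ∀ w ∈ W.verts, ∀ y, y ∈ W.reachSet w → e y ∈ P.reachSet (e w) := by
    intro w hw y hy
    induction hy with
    | refl => exact Relation.ReflTransGen.refl
    | @tail m z hm hmz ih =>
      have hmW : m ∈ W.verts := reach_mem_verts hw m hm
      have hzW : z ∈ W.verts := (W.edge_mem _ _ hmz).2
      exact Relation.ReflTransGen.tail ih ((hEdge m hmW z hzW).1 hmz)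
  haveI := hne
  refine ⟨P, ⟨⟨I, Gfam, hKf, S, rfl, ?_, ?_⟩, ?_⟩, ?_⟩
  · -- nonempty supports
    intro b hb
    obtain ⟨w, hw, rfl⟩ := hPverts ▸ hb
    exact ⟨Sum.inl ⟨w, hw⟩, by rw [he_some (Sum.inl ⟨w, hw⟩) w (hre_self w)]; exact Option.some_ne_none _⟩
  · -- strong projections on reachable parts
    intro b hb k hbk
    obtain ⟨w, hw, rfl⟩ := hPverts ▸ hb
    have hwr : w ∈ W.reachSet (base k) := by
      by_contra hcon
      exact hbk (he_none k w hcon)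
    refine ⟨?_, ?_, ?_⟩
    · intro b' hb'
      obtain ⟨y, hy, hyr, rfl⟩ := hreachP w hw b' hb'.2
      rw [he_some k y (hre_trans hwr hyr)]
      exact Option.some_ne_none _
    · intro b' hb' u hu
      obtain ⟨y, hy, hyr, rfl⟩ := hreachP w hw b' hb'.2
      rw [he_some k y (hre_trans hwr hyr)] at hu
      rw [← Option.some.inj hu]
      exact hφmem k y hy (hre_trans hwr hyr)
    · intro b' hb' c' hc' u v hu hv
      obtain ⟨y, hy, hyr, rfl⟩ := hreachP w hw b' hb'.2
      obtain ⟨z, hz, hzr, rfl⟩ := hreachP w hw c' hc'.2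
      have hyk : y ∈ W.reachSet (base k) := hre_trans hwr hyr
      have hzk : z ∈ W.reachSet (base k) := hre_trans hwr hzr
      rw [he_some k y hyk] at hu
      rw [he_some k z hzk] at hv
      have huφ : u = φf k y := (Option.some.inj hu).symm
      have hvφ : v = φf k z := (Option.some.inj hv).symm
      constructor
      · intro hE
        have hWyz : W.Edge y z := (hEdge y hy z hz).2 hE.1
        rw [huφ, hvφ]
        exact (hhom k).1.2 y z ⟨hWyz, hyk, hzk⟩
      · intro hGE
        have hWyz : W.Edge y z := by
          by_contra hn
          have hnR : ¬ (W.reachSub (base k)).Edge y z := fun hc => hn hc.1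
          exact (hhom k).2 y ⟨hy, hyk⟩ z ⟨hz, hzk⟩ hnR (huφ ▸ hvφ ▸ hGE)
        exact ⟨(hEdge y hy z hz).1 hWyz, hb'.2, hc'.2⟩
  · -- finiteness
    rw [hPverts]
    exact hfin.image e
  · -- isomorphism
    have hbij : Set.BijOn e W.verts P.verts := by
      rw [hPverts]; exact hinj.bijOn_image
    have hInv : Set.InvOn (Function.invFunOn e W.verts) e W.verts P.verts :=
      hbij.invOn_invFunOn
    refine ⟨Function.invFunOn e W.verts, hbij.symm hInv.symm, ?_⟩
    intro b hb c hc
    obtain ⟨w, hw, rfl⟩ := hPverts ▸ hb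
    obtain ⟨w', hw', rfl⟩ := hPverts ▸ hc
    exact ((hEdge w hw w' hw')).symm.trans (iff_of_eq (congrArg₂ W.Edge (hInv.1 hw).symm (hInv.1 hw').symm))

end Helpers

/-- Characterization Theorem: `Mod qId K = D I P^fin_sps K`;
in particular, a class of graphs is a graph quasivariety iff it is closed under
directed unions of isomorphic copies of finite strong pointed subproducts. -/
theorem statement_11 (K : Set GGraph) :
    ModI (qId K) = DCl (Icl (PspsFin K)) ∧
    ((K = ModI (qId K)) ↔ DCl (Icl (PspsFin K)) ⊆ K) := by
  have hmain : ModI (qId K) = DCl (Icl (PspsFin K)) := by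
    apply Set.Subset.antisymm
    · -- hard direction: a model is a directed union of copies of finite subproducts
      intro W hW
      rcases isEmpty_or_nonempty W.U with hWe | hWne
      · refine ⟨Empty, fun i => i.elim, fun i => i.elim, fun i => i.elim, fun i => i.elim,
          fun i => i.elim, ?_, fun a b => isEmptyElim a⟩
        have hv : W.verts = ∅ := Set.eq_empty_of_isEmpty _
        rw [hv]
        simp
      · refine ⟨{F : Set W.U // F ⊆ W.verts ∧ F.Finite},
          fun F => F.1, fun F a b => W.Edge a b ∧ a ∈ F.1 ∧ b ∈ F.1,
          fun F a b h => ⟨h.2.1, h.2.2⟩, ?_, ?_, ?_, ?_⟩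
        · -- each finite induced subgraph is a copy of a finite subproduct
          intro F
          have hmk : GGraph.mk W.U F.1 (fun a b => W.Edge a b ∧ a ∈ F.1 ∧ b ∈ F.1)
              (fun a b h => ⟨h.2.1, h.2.2⟩) ∈ ModI (qId K) :=
            modI_mk_of_modI hW F.1 _ _ F.2.1
              (fun a b ha hb => ⟨fun h => ⟨h, ha, hb⟩, fun h => h.1⟩)
          exact mem_Icl_PspsFin hWne F.2.2 (condA_of_modI F.2.2 hmk)
            (condB_of_modI F.2.2 hmk)
        · -- directedness
          intro F F'
          refine ⟨⟨F.1 ∪ F'.1, Set.union_subset F.2.1 F'.2.1, F.2.2.union F'.2.2⟩,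
            ⟨Set.subset_union_left, ?_⟩, ⟨Set.subset_union_right, ?_⟩⟩ <;>
          · intro a b
            simp only [Set.mem_union]
            tauto
        · -- vertices
          apply Set.Subset.antisymm
          · intro a ha
            exact Set.mem_iUnion.2 ⟨⟨{a}, Set.singleton_subset_iff.2 ha,
              Set.finite_singleton a⟩, rfl⟩
          · intro a ha
            obtain ⟨F, hF⟩ := Set.mem_iUnion.1 ha
            exact F.2.1 hF
        · -- edges
          intro a b
          constructor
          · intro h
            refine ⟨⟨{a, b}, ?_, (Set.finite_singleton b).insert a⟩, h, by simp, by simp⟩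
            rw [Set.insert_subset_iff, Set.singleton_subset_iff]
            exact ⟨(W.edge_mem a b h).1, (W.edge_mem a b h).2⟩
          · rintro ⟨F, hE⟩
            exact hE.1
    · -- easy direction: directed unions of copies of subproducts are models
      intro W hW
      exact modI_dirUnion (fun G hG => by
        obtain ⟨V₀, ⟨hV₀, -⟩, hiso⟩ := hG
        exact modI_isom (psps_modI hV₀) hiso) hW
  refine ⟨hmain, ?_, ?_⟩
  · intro hKeq
    rw [← hmain, ← hKeq]
  · intro hsub
    apply Set.Subset.antisymm
    · intro G hG imp himp
      exact himp G hG
    · rw [hmain]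
      exact hsub
end

section
/- Let G be a graph and let K be the class of all graphs H such that there is no strong homomorphism of G into any induced term subgraph of H. Then K is a graph quasivariety, i.e., K = Mod qId K. -/
open Classical

/-- A term graph: a finite graph with a vertex from which all vertices are
reachable (equivalently, a graph isomorphic to `G(t)` for a nontrivial term `t`). -/
def IsTermGraph (G : GGraph) : Prop :=
  G.verts.Finite ∧ ∃ a ∈ G.verts, G.verts ⊆ G.reachSet a

namespace GTerm
variable {X : Type}

theorem nt_leftVar {t : GTerm X} (h : t.Nontrivial) : ∃ x, t.leftVar = some x := by
  induction t with
  | var x => exact ⟨x, rfl⟩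
  | inf => exact absurd h (by simp [Nontrivial])
  | app t₁ t₂ ih₁ ih₂ => exact ih₁ h.1

theorem leftVar_mem : ∀ {t : GTerm X} {x : X}, t.leftVar = some x → x ∈ t.vars := by
  intro t
  induction t with
  | var y => intro x h; simp [leftVar] at h; simp [vars, h]
  | inf => intro x h; simp [leftVar] at h
  | app t₁ t₂ ih₁ ih₂ => intro x h; exact Set.mem_union_left _ (ih₁ h)

theorem edges_mem : ∀ {t : GTerm X} {x y : X}, (x, y) ∈ t.edges →
    x ∈ t.vars ∧ y ∈ t.vars := by
  intro t
  induction t with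
  | var y => intro x y h; simp [edges] at h
  | inf => intro x y h; simp [edges] at h
  | app t₁ t₂ ih₁ ih₂ =>
    intro x y h
    rcases h with (h | h) | h
    · exact ⟨Set.mem_union_left _ (ih₁ h).1, Set.mem_union_left _ (ih₁ h).2⟩
    · exact ⟨Set.mem_union_right _ (ih₂ h).1, Set.mem_union_right _ (ih₂ h).2⟩
    · obtain ⟨a, b, ha, hb, heq⟩ := h
      obtain ⟨rfl, rfl⟩ := Prod.mk.inj heq
      exact ⟨Set.mem_union_left _ (leftVar_mem ha), Set.mem_union_right _ (leftVar_mem hb)⟩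

theorem merge {t₁ : GTerm X} {r : X} (h₁ : t₁.Nontrivial) (hl₁ : t₁.leftVar = some r) :
    ∀ {t₂ : GTerm X}, t₂.Nontrivial → t₂.leftVar = some r →
    ∃ t : GTerm X, t.Nontrivial ∧ t.leftVar = some r ∧ t.vars = t₁.vars ∪ t₂.vars ∧
      t.edges = t₁.edges ∪ t₂.edges := by
  intro t₂
  induction t₂ with
  | var y =>
    intro _ hy
    simp [leftVar] at hy
    subst hy
    refine ⟨t₁, h₁, hl₁, ?_, by simp [edges]⟩
    have : ({y} : Set X) ⊆ t₁.vars := by simpa using leftVar_mem hl₁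
    simp [vars, Set.union_eq_self_of_subset_right this]
  | inf => intro h; exact absurd h (by simp [Nontrivial])
  | app s₁ s₂ ih₁ ih₂ =>
    intro hnt hl
    obtain ⟨t', ht'nt, ht'l, ht'v, ht'e⟩ := ih₁ hnt.1 hl
    refine ⟨app t' s₂, ⟨ht'nt, hnt.2⟩, ht'l, ?_, ?_⟩
    · show t'.vars ∪ s₂.vars = _
      rw [ht'v]
      show _ = t₁.vars ∪ (s₁.vars ∪ s₂.vars)
      rw [Set.union_assoc]
    · show t'.edges ∪ s₂.edges ∪ _ = _
      have hll : t'.leftVar = s₁.leftVar := by rw [ht'l]; exact hl.symm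
      rw [ht'e, hll]
      show _ = t₁.edges ∪ (s₁.edges ∪ s₂.edges ∪ _)
      ext p
      simp only [Set.mem_union]
      tauto

theorem chain_term {R : X → X → Prop} {r a b : X} (hw : Relation.ReflTransGen R r a)
    (hab : R a b) :
    ∃ t : GTerm X, t.Nontrivial ∧ t.leftVar = some r ∧ (a, b) ∈ t.edges ∧
      t.vars ⊆ {y | Relation.ReflTransGen R r y} ∧ t.edges ⊆ {p | R p.1 p.2} := by
  induction hw using Relation.ReflTransGen.head_induction_on with
  | refl =>
    refine ⟨app (var a) (var b), ⟨trivial, trivial⟩, rfl, ?_, ?_, ?_⟩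
    · show (a, b) ∈ _ ∪ _ ∪ _
      refine Set.mem_union_right _ ⟨a, b, rfl, rfl, rfl⟩
    · intro x hx
      rcases hx with hx | hx
      · simp [vars] at hx; subst hx; exact Relation.ReflTransGen.refl
      · simp [vars] at hx; subst hx; exact Relation.ReflTransGen.single hab
    · intro p hp
      rcases hp with (hp | hp) | hp
      · simp [edges] at hp
      · simp [edges] at hp
      · obtain ⟨x, y, hx, hy, rfl⟩ := hp
        simp [leftVar] at hx hy
        subst hx; subst hy
        exact hab
  | @head s c hrc hca ih =>
    obtain ⟨t, htnt, htl, htab, htv, hte⟩ := ih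
    refine ⟨app (var s) t, ⟨trivial, htnt⟩, rfl, ?_, ?_, ?_⟩
    · exact Set.mem_union_left _ (Set.mem_union_right _ htab)
    · intro x hx
      rcases hx with hx | hx
      · simp [vars] at hx; subst hx; exact Relation.ReflTransGen.refl
      · exact Relation.ReflTransGen.head hrc (htv hx)
    · intro p hp
      rcases hp with (hp | hp) | hp
      · simp [edges] at hp
      · exact hte hp
      · obtain ⟨x, y, hx, hy, rfl⟩ := hp
        simp [leftVar] at hx
        rw [htl] at hy
        simp at hy
        subst hx; subst hy
        exact hrc

theorem exists_term {R : X → X → Prop} {V : Set X} {r : X}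
    (hRV : ∀ a b, R a b → a ∈ V ∧ b ∈ V) (hfin : V.Finite) (hr : r ∈ V)
    (hreach : ∀ v ∈ V, Relation.ReflTransGen R r v) :
    ∃ t : GTerm X, t.Nontrivial ∧ t.leftVar = some r ∧ t.vars = V ∧
      t.edges = {p | R p.1 p.2} := by
  set E : Set (X × X) := {p | R p.1 p.2} with hE
  have hEfin : E.Finite := by
    refine (hfin.prod hfin).subset ?_
    intro p hp
    exact Set.mk_mem_prod (hRV _ _ hp).1 (hRV _ _ hp).2
  have hreachV : ∀ v, Relation.ReflTransGen R r v → v ∈ V := by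
    intro v hv
    induction hv with
    | refl => exact hr
    | tail _ h ih => exact (hRV _ _ h).2
  have key : ∀ F : Set (X × X), F.Finite → F ⊆ E →
      ∃ t : GTerm X, t.Nontrivial ∧ t.leftVar = some r ∧ F ⊆ t.edges ∧
        t.edges ⊆ E ∧ t.vars ⊆ V := by
    intro F hF
    refine Set.Finite.induction_on (motive := fun F _ => F ⊆ E →
      ∃ t : GTerm X, t.Nontrivial ∧ t.leftVar = some r ∧ F ⊆ t.edges ∧
        t.edges ⊆ E ∧ t.vars ⊆ V) F hF ?_ ?_
    · intro _
      refine ⟨var r, trivial, rfl, by simp [edges], by simp [edges], ?_⟩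
      intro x hx; simp [vars] at hx; subst hx; exact hr
    · intro p F' hp hFfin ih hsub
      have hpE : R p.1 p.2 := hsub (Set.mem_insert _ _)
      have hF'E : F' ⊆ E := fun q hq => hsub (Set.mem_insert_of_mem _ hq)
      obtain ⟨t₁, h₁nt, h₁l, h₁F, h₁E, h₁V⟩ := ih hF'E
      obtain ⟨t₂, h₂nt, h₂l, h₂ab, h₂v, h₂e⟩ :=
        chain_term (hreach p.1 (hRV _ _ hpE).1) hpE
      obtain ⟨t, htnt, htl, htv, hte⟩ := merge h₁nt h₁l h₂nt h₂l
      refine ⟨t, htnt, htl, ?_, ?_, ?_⟩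
      · rw [hte]
        intro q hq
        rcases hq with rfl | hq
        · exact Set.mem_union_right _ h₂ab
        · exact Set.mem_union_left _ (h₁F hq)
      · rw [hte]
        exact Set.union_subset h₁E h₂e
      · rw [htv]
        refine Set.union_subset h₁V ?_
        intro x hx
        exact hreachV x (h₂v hx)
  obtain ⟨t, htnt, htl, htF, htE, htV⟩ := key E hEfin (le_refl _)
  have hedges : t.edges = E := Set.Subset.antisymm htE htF
  refine ⟨t, htnt, htl, ?_, hedges⟩
  refine Set.Subset.antisymm htV ?_
  intro v hv
  rcases (hreach v hv).cases_tail with rfl | ⟨c, _, hcv⟩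
  · exact leftVar_mem htl
  · have : (c, v) ∈ t.edges := by rw [hedges]; exact hcv
    exact (edges_mem this).2

end GTerm

theorem eval_app_eq {A : GGraph} {X : Type} (h : X → Option A.U) (t₁ t₂ : GTerm X) :
    A.eval h (GTerm.app t₁ t₂) =
      match A.eval h t₁, A.eval h t₂ with
      | some a, some b => if A.Edge a b then some a else none
      | _, _ => none := rfl

theorem eval_var_eq {A : GGraph} {X : Type} (h : X → Option A.U) (x : X) :
    A.eval h (GTerm.var x) = h x := rfl

theorem eval_app_some {A : GGraph} {X : Type} {h : X → Option A.U} {t₁ t₂ : GTerm X}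
    {u v : A.U} (h₁ : A.eval h t₁ = some u) (h₂ : A.eval h t₂ = some v) :
    A.eval h (GTerm.app t₁ t₂) = if A.Edge u v then some u else none := by
  rw [eval_app_eq, h₁, h₂]

theorem eval_vars_ne_none {A : GGraph} {X : Type} {h : X → Option A.U} :
    ∀ s : GTerm X, A.eval h s ≠ none → ∀ x ∈ s.vars, h x ≠ none := by
  intro s
  induction s with
  | var y =>
    intro hs x hx
    simp only [GTerm.vars, Set.mem_singleton_iff] at hx
    subst hx
    exact hs
  | inf => intro hs; exact absurd rfl hs
  | app t₁ t₂ ih₁ ih₂ =>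
    intro hs x hx
    rcases e₁ : A.eval h t₁ with _ | u
    · exact absurd (by rw [eval_app_eq, e₁]) hs
    rcases e₂ : A.eval h t₂ with _ | v
    · exact absurd (by rw [eval_app_eq, e₁, e₂]) hs
    rcases hx with hx | hx
    · exact ih₁ (by rw [e₁]; exact fun hc => nomatch hc) x hx
    · exact ih₂ (by rw [e₂]; exact fun hc => nomatch hc) x hx

theorem eval_some_s16 {A : GGraph} {X : Type} {h : X → Option A.U} :
    ∀ s : GTerm X, s.Nontrivial →
      (∀ x y, (x, y) ∈ s.edges → ∃ u v, h x = some u ∧ h y = some v ∧ A.Edge u v) →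
      (∀ x ∈ s.vars, h x ≠ none) →
      ∃ x, s.leftVar = some x ∧ A.eval h s = h x := by
  intro s
  induction s with
  | var y => intro _ _ _; exact ⟨y, rfl, rfl⟩
  | inf => intro hnt; exact absurd hnt (by simp [GTerm.Nontrivial])
  | app t₁ t₂ ih₁ ih₂ =>
    intro hnt hedges hvars
    obtain ⟨x₁, l₁, ev₁⟩ := ih₁ hnt.1
      (fun x y hxy => hedges x y (Set.mem_union_left _ (Set.mem_union_left _ hxy)))
      (fun x hx => hvars x (Set.mem_union_left _ hx))
    obtain ⟨x₂, l₂, ev₂⟩ := ih₂ hnt.2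
      (fun x y hxy => hedges x y (Set.mem_union_left _ (Set.mem_union_right _ hxy)))
      (fun x hx => hvars x (Set.mem_union_right _ hx))
    have hmem : (x₁, x₂) ∈ (GTerm.app t₁ t₂).edges :=
      Set.mem_union_right _ ⟨x₁, x₂, l₁, l₂, rfl⟩
    obtain ⟨u, v, hu, hv, hEdge⟩ := hedges x₁ x₂ hmem
    refine ⟨x₁, l₁, ?_⟩
    rw [eval_app_some (by rw [ev₁, hu]) (by rw [ev₂, hv]), if_pos hEdge, hu]

theorem eval_app_vars {A : GGraph} {X : Type} {h : X → Option A.U} {x y : X} {u v : A.U}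
    (h₁ : h x = some u) (h₂ : h y = some v) :
    A.eval h (GTerm.app (GTerm.var x) (GTerm.var y)) =
      if A.Edge u v then some u else none := by
  rw [eval_app_eq, eval_var_eq, eval_var_eq, h₁, h₂]

/-- for any graph `G`, the class of all graphs `H` admitting no
strong homomorphism of `G` into any induced term subgraph of `H` is a graph
quasivariety. -/
theorem statement_16 (G : GGraph) :
    {H : GGraph | ¬ ∃ S : Set H.U, IsTermGraph (H.induce S) ∧
        ∃ f : G.U → H.U, IsStrongHom G (H.induce S) f} =
      ModI (qId {H : GGraph | ¬ ∃ S : Set H.U, IsTermGraph (H.induce S) ∧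
        ∃ f : G.U → H.U, IsStrongHom G (H.induce S) f}) := by
  apply Set.Subset.antisymm
  · intro H hH imp himp
    exact himp H hH
  · intro H hH
    intro hc
    obtain ⟨S, hTG, f, hf⟩ := hc
    set T := H.induce S with hT
    obtain ⟨hTfin, r, hr, hreach⟩ := hTG
    -- an injection of the (finite) vertex set of T into ℕ
    obtain ⟨g0, hg0⟩ := Set.countable_iff_exists_injective.mp hTfin.countable
    set g : H.U → ℕ := fun a => if ha : a ∈ T.verts then g0 ⟨a, ha⟩ else 0 with hgdef
    have hginj : ∀ a ∈ T.verts, ∀ b ∈ T.verts, g a = g b → a = b := by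
      intro a ha b hb hab
      simp only [hgdef, dif_pos ha, dif_pos hb] at hab
      have := @hg0 ⟨a, ha⟩ ⟨b, hb⟩ ((dif_pos ha).symm.trans (hab.trans (dif_pos hb)))
      exact congrArg Subtype.val this
    -- the coded copy of T over ℕ
    set V' : Set ℕ := g '' T.verts with hV'
    set R' : ℕ → ℕ → Prop := fun n m => ∃ a b, T.Edge a b ∧ g a = n ∧ g b = m with hR'
    have hRV : ∀ n m, R' n m → n ∈ V' ∧ m ∈ V' := by
      rintro n m ⟨a, b, hab, rfl, rfl⟩
      exact ⟨⟨a, (T.edge_mem a b hab).1, rfl⟩, ⟨b, (T.edge_mem a b hab).2, rfl⟩⟩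
    have hmap : ∀ a b, T.Edge a b → R' (g a) (g b) := fun a b hab => ⟨a, b, hab, rfl, rfl⟩
    have hreach' : ∀ v ∈ V', Relation.ReflTransGen R' (g r) v := by
      rintro v ⟨a, ha, rfl⟩
      exact Relation.ReflTransGen.lift (r := T.Edge) (p := R') g hmap _ _ (hreach ha)
    obtain ⟨t, htnt, htl, htv, hte⟩ :=
      GTerm.exists_term hRV (hTfin.image g) ⟨r, hr, rfl⟩ hreach'
    -- the premise: the coded diagram of T
    set prem : Set (GId ℕ) := {e | ∃ a b, a ∈ T.verts ∧ b ∈ T.verts ∧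
      ((T.Edge a b ∧
          e = (GTerm.app (GTerm.var (g a)) (GTerm.var (g b)), GTerm.var (g a))) ∨
       (¬ T.Edge a b ∧
          e = (GTerm.app (GTerm.var (g a)) (GTerm.var (g b)), GTerm.inf)))} with hpremdef
    have hpremfin : prem.Finite := by
      have hsub : prem ⊆ (fun p : H.U × H.U =>
          if T.Edge p.1 p.2 then
            (GTerm.app (GTerm.var (g p.1)) (GTerm.var (g p.2)), GTerm.var (g p.1))
          else
            (GTerm.app (GTerm.var (g p.1)) (GTerm.var (g p.2)), GTerm.inf)) ''
            (T.verts ×ˢ T.verts) := by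
        rintro e ⟨a, b, ha, hb, (⟨hab, rfl⟩ | ⟨hab, rfl⟩)⟩
        · exact ⟨(a, b), Set.mk_mem_prod ha hb, by simp [hab]⟩
        · exact ⟨(a, b), Set.mk_mem_prod ha hb, by simp [hab]⟩
      exact ((hTfin.prod hTfin).image _).subset hsub
    set imp : Imp := ⟨prem, (t, GTerm.inf), hpremfin⟩ with himpdef
    -- every graph in the class K satisfies imp
    have hqId : imp ∈ qId {H : GGraph | ¬ ∃ S : Set H.U, IsTermGraph (H.induce S) ∧
        ∃ f : G.U → H.U, IsStrongHom G (H.induce S) f} := by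
      intro H' hH' h hA hpr
      show H'.eval h t = H'.eval h GTerm.inf
      by_contra hev
      have hev' : H'.eval h t ≠ none := hev
      have hvars := eval_vars_ne_none t hev'
      have hsome : ∀ a ∈ T.verts, ∃ u, h (g a) = some u := by
        intro a ha
        have hmem : g a ∈ t.vars := by rw [htv]; exact ⟨a, ha, rfl⟩
        rcases hx : h (g a) with _ | u
        · exact absurd hx (hvars _ hmem)
        · exact ⟨u, rfl⟩
      obtain ⟨u₀, hu₀⟩ := hsome r hr
      set φ : H.U → H'.U := fun a => (h (g a)).getD u₀ with hφdef
      have hφeq : ∀ a ∈ T.verts, h (g a) = some (φ a) := by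
        intro a ha
        obtain ⟨u, hu⟩ := hsome a ha
        simp only [hφdef, hu, Option.getD_some]
      have hφv : ∀ a ∈ T.verts, φ a ∈ H'.verts := fun a ha => hA _ _ (hφeq a ha)
      have hφe : ∀ a b, T.Edge a b → H'.Edge (φ a) (φ b) := by
        intro a b hab
        have ha := (T.edge_mem a b hab).1
        have hb := (T.edge_mem a b hab).2
        have he : (GTerm.app (GTerm.var (g a)) (GTerm.var (g b)), GTerm.var (g a)) ∈ prem :=
          ⟨a, b, ha, hb, Or.inl ⟨hab, rfl⟩⟩
        have hid := hpr _ he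
        have hid' : H'.eval h (GTerm.app (GTerm.var (g a)) (GTerm.var (g b))) = h (g a) := hid
        rw [eval_app_vars (hφeq a ha) (hφeq b hb), hφeq a ha] at hid'
        by_contra hne
        rw [if_neg hne] at hid'
        exact nomatch hid'
      have hφn : ∀ a ∈ T.verts, ∀ b ∈ T.verts, ¬ T.Edge a b → ¬ H'.Edge (φ a) (φ b) := by
        intro a ha b hb hab
        have he : (GTerm.app (GTerm.var (g a)) (GTerm.var (g b)), GTerm.inf) ∈ prem :=
          ⟨a, b, ha, hb, Or.inr ⟨hab, rfl⟩⟩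
        have hid := hpr _ he
        have hid' : H'.eval h (GTerm.app (GTerm.var (g a)) (GTerm.var (g b))) = none := hid
        rw [eval_app_vars (hφeq a ha) (hφeq b hb)] at hid'
        intro hedge
        rw [if_pos hedge] at hid'
        exact nomatch hid'
      -- build a forbidden configuration inside H'
      refine hH' ⟨φ '' T.verts, ⟨?_, φ r, ⟨hφv r hr, r, hr, rfl⟩, ?_⟩,
        fun a => φ (f a), ⟨?_, ?_⟩, ?_⟩
      · exact ((hTfin.image φ).inter_of_right _)
      · intro x hx
        obtain ⟨a, ha, rfl⟩ := hx.2
        refine Relation.ReflTransGen.lift (r := T.Edge) (p := (H'.induce (φ '' T.verts)).Edge) φ ?_ _ _ (hreach ha)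
        intro c d hcd
        exact ⟨hφe c d hcd, ⟨c, (T.edge_mem c d hcd).1, rfl⟩, ⟨d, (T.edge_mem c d hcd).2, rfl⟩⟩
      · intro a ha
        exact ⟨hφv _ (hf.1.1 a ha), ⟨f a, hf.1.1 a ha, rfl⟩⟩
      · intro a b hab
        have hTe := hf.1.2 a b hab
        exact ⟨hφe _ _ hTe, ⟨f a, (T.edge_mem _ _ hTe).1, rfl⟩, ⟨f b, (T.edge_mem _ _ hTe).2, rfl⟩⟩
      · intro a ha b hb hn hedge
        exact hφn (f a) (hf.1.1 a ha) (f b) (hf.1.1 b hb) (hf.2 a ha b hb hn) hedge.1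
    -- H satisfies imp, but the natural assignment refutes it
    have hsat := hH imp hqId
    set h₀ : ℕ → Option H.U :=
      fun n => if hn : ∃ a, a ∈ T.verts ∧ g a = n then some hn.choose else none with h₀def
    have hh₀ : ∀ a ∈ T.verts, h₀ (g a) = some a := by
      intro a ha
      have hex : ∃ b, b ∈ T.verts ∧ g b = g a := ⟨a, ha, rfl⟩
      simp only [h₀def, dif_pos hex]
      exact congrArg some (hginj _ hex.choose_spec.1 _ ha hex.choose_spec.2)
    have hA₀ : H.Assign h₀ := by
      intro x a hxa
      simp only [h₀def] at hxa
      split at hxa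
      · rename_i hex
        cases hxa
        exact hex.choose_spec.1.1
      · exact nomatch hxa
    have hpr₀ : ∀ e ∈ prem, H.SatIdWith h₀ e := by
      rintro e ⟨a, b, ha, hb, (⟨hab, rfl⟩ | ⟨hab, rfl⟩)⟩
      · show H.eval h₀ _ = H.eval h₀ _
        rw [eval_app_vars (hh₀ a ha) (hh₀ b hb), if_pos hab.1]
        exact (hh₀ a ha).symm
      · show H.eval h₀ _ = H.eval h₀ _
        have hnab : ¬ H.Edge a b := fun hHab => hab ⟨hHab, ha.2, hb.2⟩
        rw [eval_app_vars (hh₀ a ha) (hh₀ b hb), if_neg hnab]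
        rfl
    have hconcl : H.eval h₀ t = none := hsat h₀ hA₀ hpr₀
    have hed : ∀ x y, (x, y) ∈ t.edges →
        ∃ u v, h₀ x = some u ∧ h₀ y = some v ∧ H.Edge u v := by
      intro x y hxy
      rw [hte] at hxy
      obtain ⟨a, b, hab, rfl, rfl⟩ := hxy
      exact ⟨a, b, hh₀ a (T.edge_mem a b hab).1, hh₀ b (T.edge_mem a b hab).2, hab.1⟩
    have hva : ∀ x ∈ t.vars, h₀ x ≠ none := by
      intro x hx
      rw [htv] at hx
      obtain ⟨a, ha, rfl⟩ := hx
      rw [hh₀ a ha]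
      exact fun hc => nomatch hc
    obtain ⟨x, hx, hevval⟩ := eval_some_s16 (A := H) (h := h₀) t htnt hed hva
    rw [htl] at hx
    cases hx
    rw [hh₀ r hr, hconcl] at hevval
    exact nomatch hevval
end

section
/- For n ∈ ℕ let P_n be the directed path with vertex set {0,…,n} and edge set {(i,i+1) : 0 ≤ i ≤ n−1}, and let P_ω be the infinite directed path with vertex set ℕ and edge set {(i,i+1) : i ∈ ℕ}. Let K = {P_n : n ∈ ℕ}. Then P_ω ∈ Mod qId K, but P_ω is not isomorphic to any strong pointed subproduct of a family of members of K (P_ω ∉ I P_sps K). Consequently the inclusion I P_sps K ⊆ Mod qId K can be proper. -/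
open Classical

/-- The directed path `P_n` of length `n`, with vertices `0, …, n` and edges
`(i, i+1)` for `0 ≤ i ≤ n-1`. -/
def Pn (n : ℕ) : GGraph where
  U := ℕ
  verts := {k | k ≤ n}
  Edge a b := b = a + 1 ∧ b ≤ n
  edge_mem a b h := by
    obtain ⟨rfl, h2⟩ := h
    exact ⟨Nat.le_of_succ_le h2, h2⟩

/-- The countably infinite directed path `P_ω`. -/
def Pinf : GGraph where
  U := ℕ
  verts := Set.univ
  Edge a b := b = a + 1
  edge_mem _ _ _ := ⟨Set.mem_univ _, Set.mem_univ _⟩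


theorem eval_congr (G : GGraph) {X : Type} (h h' : X → Option G.U) (t : GTerm X)
    (hx : ∀ x ∈ t.vars, h x = h' x) : G.eval h t = G.eval h' t := by
  induction t with
  | var x => exact hx x (by simp [GTerm.vars])
  | inf => rfl
  | app t₁ t₂ ih₁ ih₂ =>
    have e1 := ih₁ fun x hx' => hx x (Set.mem_union_left _ hx')
    have e2 := ih₂ fun x hx' => hx x (Set.mem_union_right _ hx')
    simp only [GGraph.eval, e1, e2]

theorem eval_some_var (G : GGraph) {X : Type} (h : X → Option G.U) (t : GTerm X) (a : G.U)
    (hev : G.eval h t = some a) : ∃ x ∈ t.vars, h x = some a := by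
  induction t with
  | var x => exact ⟨x, by simp [GTerm.vars], hev⟩
  | inf => simp [GGraph.eval] at hev
  | app t₁ t₂ ih₁ ih₂ =>
    rcases e1 : G.eval h t₁ with _ | a1 <;> rcases e2 : G.eval h t₂ with _ | a2 <;>
        simp only [GGraph.eval, e1, e2] at hev <;>
      try exact absurd hev.symm (Option.some_ne_none _)
    split_ifs at hev with hE
    obtain rfl : a1 = a := Option.some.inj hev
    obtain ⟨x, hx, hxa⟩ := ih₁ e1
    exact ⟨x, Set.mem_union_left _ hx, hxa⟩

theorem eval_Pinf_eq_Pn (N : ℕ) (h : ℕ → Option ℕ) (t : GTerm ℕ)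
    (hb : ∀ x ∈ t.vars, ∀ m : ℕ, h x = some m → m + 1 ≤ N) :
    Pinf.eval h t = (Pn N).eval h t := by
  induction t with
  | var x => rfl
  | inf => rfl
  | app t₁ t₂ ih₁ ih₂ =>
    have e1 := ih₁ fun x hx => hb x (Set.mem_union_left _ hx)
    have e2 := ih₂ fun x hx => hb x (Set.mem_union_right _ hx)
    rcases hv1 : Pinf.eval h t₁ with _ | a <;> rcases hv2 : Pinf.eval h t₂ with _ | b <;>
      simp only [GGraph.eval, hv1, hv2, e1 ▸ hv1, e2 ▸ hv2] <;> try rfl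
    obtain ⟨x, hx, hxb⟩ := eval_some_var Pinf h t₂ b hv2
    have hbN := hb x (Set.mem_union_right _ hx) b hxb
    have hEiff : Pinf.Edge a b ↔ (Pn N).Edge a b := by
      constructor
      · intro hE
        exact ⟨hE, Nat.le_of_succ_le hbN⟩
      · intro hE
        exact hE.1
    by_cases hE : Pinf.Edge a b
    · rw [if_pos hE, if_pos (hEiff.mp hE)]; rfl
    · rw [if_neg hE, if_neg fun hc => hE (hEiff.mpr hc)]; rfl

theorem no_infinite_chain : ∀ H ∈ Set.range Pn, ∀ u : ℕ → H.U,
    ¬ ∀ n, H.Edge (u n) (u (n + 1)) := by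
  rintro H ⟨m, rfl⟩ u hu
  let u' : ℕ → ℕ := u
  have hu' : ∀ n : ℕ, u' (n + 1) = u' n + 1 ∧ u' (n + 1) ≤ m := hu
  have hun : ∀ n : ℕ, u' n = u' 0 + n := by
    intro n
    induction n with
    | zero => rfl
    | succ n ih =>
      rw [(hu' n).1, ih]
      omega
  have h1 := (hu' m).2
  have h2 := hun (m + 1)
  omega

/-- `P_ω ∈ Mod qId {P_n : n ∈ ℕ}`, but `P_ω` is not isomorphic to
any strong pointed subproduct of a family of finite paths; hence the inclusion
`I P_sps K ⊆ Mod qId K` can be proper. -/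
theorem statement_18 :
    Pinf ∈ ModI (qId (Set.range Pn)) ∧ Pinf ∉ Icl (Psps (Set.range Pn)) := by
  constructor
  · -- Part 1
    intro imp himp h _hassign hprem
    let hn : ℕ → Option ℕ := h
    set X₀ : Set ℕ := (imp.concl.1.vars ∪ imp.concl.2.vars) ∪
      ⋃ e ∈ imp.prem, (e.1.vars ∪ e.2.vars) with hX₀
    have hfin : X₀.Finite := by
      refine (imp.concl.1.vars_finite.union imp.concl.2.vars_finite).union ?_
      exact imp.prem_fin.biUnion fun e _ => e.1.vars_finite.union e.2.vars_finite
    set F := hfin.toFinset with hF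
    have hmemF : ∀ x, x ∈ F ↔ x ∈ X₀ := fun x => hfin.mem_toFinset
    set N : ℕ := F.sup (fun x => (hn x).getD 0) + 1 with hNdef
    set h' : ℕ → Option ℕ := fun x => if x ∈ F then hn x else none with hh'
    have hbound : ∀ x, ∀ m : ℕ, h' x = some m → m + 1 ≤ N := by
      intro x m hm
      by_cases hx : x ∈ F
      · simp only [hh', if_pos hx] at hm
        have hle : (hn x).getD 0 ≤ F.sup (fun x => (hn x).getD 0) :=
          Finset.le_sup (f := fun x => (hn x).getD 0) hx
        rw [hm] at hle
        simp only [Option.getD_some] at hle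
        omega
      · simp [hh', if_neg hx] at hm
    have hassign' : (Pn N).Assign h' := by
      intro x a ha
      exact Nat.le_of_succ_le (hbound x a ha)
    have key : ∀ t : GTerm ℕ, t.vars ⊆ X₀ → Pinf.eval hn t = (Pn N).eval h' t := by
      intro t ht
      have step1 : Pinf.eval hn t = Pinf.eval h' t := by
        refine eval_congr Pinf hn h' t fun x hx => ?_
        have hxF : x ∈ F := (hmemF x).mpr (ht hx)
        exact (if_pos hxF).symm
      rw [step1]
      exact eval_Pinf_eq_Pn N h' t fun x _ m hm => hbound x m hm
    have hsub_c1 : imp.concl.1.vars ⊆ X₀ := fun x hx =>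
      Set.mem_union_left _ (Set.mem_union_left _ hx)
    have hsub_c2 : imp.concl.2.vars ⊆ X₀ := fun x hx =>
      Set.mem_union_left _ (Set.mem_union_right _ hx)
    have hsub_p : ∀ e ∈ imp.prem, e.1.vars ⊆ X₀ ∧ e.2.vars ⊆ X₀ := by
      intro e he
      exact ⟨fun x hx =>
          Set.mem_union_right _ (Set.mem_biUnion he (Set.mem_union_left _ hx)),
        fun x hx =>
          Set.mem_union_right _ (Set.mem_biUnion he (Set.mem_union_right _ hx))⟩
    have hPN : (Pn N).SatImp imp := himp (Pn N) ⟨N, rfl⟩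
    have hconc := hPN h' hassign' (by
      intro e he
      show (Pn N).eval h' e.1 = (Pn N).eval h' e.2
      rw [← key e.1 (hsub_p e he).1, ← key e.2 (hsub_p e he).2]
      exact hprem e he)
    show Pinf.eval hn imp.concl.1 = Pinf.eval hn imp.concl.2
    rw [key imp.concl.1 hsub_c1, key imp.concl.2 hsub_c2]
    exact hconc
  · -- Part 2
    rintro ⟨V, hV, hiso⟩
    obtain ⟨I, G, hGK, S, hWeq, hsupp, hstrong⟩ := hV
    subst hWeq
    set W := (pointedProd G).induce S with hW
    obtain ⟨f, hbij, hiff⟩ := hiso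
    let fn : W.U → ℕ := f
    have hv : ∀ n : ℕ, ∃ w ∈ W.verts, f w = n := by
      intro n
      obtain ⟨w, hw, hfw⟩ := hbij.2.2 (Set.mem_univ (n : Pinf.U))
      exact ⟨w, hw, hfw⟩
    choose v hvmem hvf using hv
    have hvf' : ∀ n : ℕ, fn (v n) = n := hvf
    have hE : ∀ n, W.Edge (v n) (v (n + 1)) := by
      intro n
      refine (hiff (v n) (hvmem n) (v (n + 1)) (hvmem (n + 1))).mpr ?_
      show fn (v (n + 1)) = fn (v n) + 1
      rw [hvf' n, hvf' (n + 1)]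
    have hreach : ∀ n, Relation.ReflTransGen W.Edge (v 0) (v n) := by
      intro n
      induction n with
      | zero => exact Relation.ReflTransGen.refl
      | succ n ih => exact ih.tail (hE n)
    obtain ⟨k, hk⟩ := hsupp (v 0) (hvmem 0)
    obtain ⟨h1, _h2, h3⟩ := hstrong (v 0) (hvmem 0) k hk
    have hmemR : ∀ n, v n ∈ (W.reachSub (v 0)).verts := fun n =>
      Set.mem_inter (hvmem n) (hreach n)
    have huex : ∀ n, ∃ x, (v n) k = some x := by
      intro n
      rcases hx : (v n) k with _ | x
      · exact absurd hx (h1 (v n) (hmemR n))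
      · exact ⟨x, rfl⟩
    choose u hu using huex
    have hEdge : ∀ n, (G k).Edge (u n) (u (n + 1)) := by
      intro n
      refine (h3 (v n) (hmemR n) (v (n + 1)) (hmemR (n + 1)) (u n) (u (n + 1))
        (hu n) (hu (n + 1))).mp ?_
      exact ⟨hE n, hreach n, hreach (n + 1)⟩
    exact no_infinite_chain (G k) (hGK k) u hEdge
end
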